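/- There exists an absolute constant c > 0 such that the following holds for every integer t ≥ 2. Let A be a family of n axis-parallel frames and B a family of m axis-parallel frames in the plane, such that the underlying rectangles of A ∪ B are in general position. If the bipartite intersection graph G_{A,B} is K_{t,t}-free, then |E(G_{A,B})| ≤ c·( t⁶·n + t·m ). -/

import Mathlib

open scoped Classical
open Finset

/-- An axis-parallel rectangle `[x₁,x₂] × [y₁,y₂]` with `x₁ < x₂` and `y₁ < y₂`. -/
structure Rect where
  x1 : ℝ
  x2 : ℝ
  y1 : ℝ
  y2 : ℝ
  hx : x1 < x2
  hy : y1 < y2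

/-- The frame (boundary) of an axis-parallel rectangle: the union of its two horizontal
edges and its two vertical edges. -/
def Rect.frame (r : Rect) : Set (ℝ × ℝ) :=
  (Set.Icc r.x1 r.x2 ×ˢ ({r.y1, r.y2} : Set ℝ)) ∪
    (({r.x1, r.x2} : Set ℝ) ×ˢ Set.Icc r.y1 r.y2)

/-- A family of axis-parallel rectangles is in general position if the x-coordinates of all
vertical edges are pairwise distinct and the y-coordinates of all horizontal edges are
pairwise distinct. -/
def GenPos (F : Finset Rect) : Prop :=
  ∀ r ∈ F, ∀ s ∈ F, r ≠ s →
    ({r.x1, r.x2} ∩ {s.x1, s.x2} : Set ℝ) = ∅ ∧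
    ({r.y1, r.y2} ∩ {s.y1, s.y2} : Set ℝ) = ∅


set_option linter.unusedSectionVars false

section Rank
variable {α : Type*} [DecidableEq α]

/-- rank of `v` in `F` by key `f`: number of elements with strictly smaller key -/
noncomputable def rnk (F : Finset α) (f : α → ℝ) (v : α) : ℕ :=
  (F.filter fun w => f w < f v).card

/-- the `t` smallest elements of `F` by key `f` (when keys are injective) -/
noncomputable def wop (F : Finset α) (f : α → ℝ) (t : ℕ) : Finset α :=
  F.filter fun v => rnk F f v < t

lemma wop_subset (F : Finset α) (f : α → ℝ) (t : ℕ) : wop F f t ⊆ F :=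
  Finset.filter_subset _ _

lemma rnk_lt_rnk {F : Finset α} {f : α → ℝ} {v w : α} (hv : v ∈ F) (hvw : f v < f w) :
    rnk F f v < rnk F f w := by
  unfold rnk
  apply Finset.card_lt_card
  constructor
  · intro z hz
    simp only [Finset.mem_filter] at hz ⊢
    exact ⟨hz.1, lt_trans hz.2 hvw⟩
  · intro hsub
    have : v ∈ F.filter fun w' => f w' < f w := by
      simp only [Finset.mem_filter]; exact ⟨hv, hvw⟩
    have hv' := hsub this
    simp only [Finset.mem_filter] at hv'
    exact absurd hv'.2 (lt_irrefl _)

lemma rnk_lt_card {F : Finset α} {f : α → ℝ} {v : α} (hv : v ∈ F) :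
    rnk F f v < F.card := by
  unfold rnk
  have : (F.filter fun w => f w < f v) ⊆ F.erase v := by
    intro z hz
    simp only [Finset.mem_filter] at hz
    refine Finset.mem_erase.2 ⟨?_, hz.1⟩
    intro h; subst h; exact absurd hz.2 (lt_irrefl _)
  calc (F.filter fun w => f w < f v).card ≤ (F.erase v).card := Finset.card_le_card this
    _ < F.card := Finset.card_erase_lt_of_mem hv

/-- If `t ≤ |F|` then the set of elements of rank `< t` has at least `t` elements. -/
lemma wop_card_ge {F : Finset α} {f : α → ℝ} (hinj : Set.InjOn f F) {t : ℕ}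
    (hF : t ≤ F.card) : t ≤ (wop F f t).card := by
  classical
  have hcompl : (F.filter fun v => ¬ rnk F f v < t).card ≤ F.card - t := by
    have hmap : ∀ v ∈ F.filter fun v => ¬ rnk F f v < t, rnk F f v ∈ Finset.Ico t F.card := by
      intro v hv
      simp only [Finset.mem_filter, not_lt] at hv
      exact Finset.mem_Ico.2 ⟨hv.2, rnk_lt_card hv.1⟩
    have hinj2 : Set.InjOn (rnk F f) (F.filter fun v => ¬ rnk F f v < t) := by
      intro v hv w hw hvw
      simp only [Finset.coe_filter, Set.mem_setOf_eq] at hv hw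
      by_contra hne
      have hfne : f v ≠ f w := fun h => hne (hinj hv.1 hw.1 h)
      rcases lt_or_gt_of_ne hfne with h | h
      · exact absurd hvw (Nat.ne_of_lt (rnk_lt_rnk hv.1 h))
      · exact absurd hvw.symm (Nat.ne_of_lt (rnk_lt_rnk hw.1 h))
    calc (F.filter fun v => ¬ rnk F f v < t).card ≤ (Finset.Ico t F.card).card :=
          Finset.card_le_card_of_injOn _ hmap hinj2
      _ = F.card - t := Nat.card_Ico t F.card
  have hsplit := Finset.card_filter_add_card_filter_not
    (s := F) (p := fun v => rnk F f v < t)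
  unfold wop
  omega

/-- Removing an element not in the `t`-smallest set does not change the `t`-smallest set. -/
lemma wop_erase {F : Finset α} {f : α → ℝ} (hinj : Set.InjOn f F) {t : ℕ} {w : α}
    (hw : w ∉ wop F f t) : wop (F.erase w) f t = wop F f t := by
  classical
  by_cases hwF : w ∈ F
  · have hrw : t ≤ rnk F f w := by
      by_contra h
      push_neg at h
      exact hw (Finset.mem_filter.2 ⟨hwF, h⟩)
    ext v
    simp only [wop, Finset.mem_filter, Finset.mem_erase]
    constructor
    · rintro ⟨⟨hvw, hvF⟩, hr⟩
      refine ⟨hvF, ?_⟩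
      -- rnk F f v ≤ rnk (F.erase w) f v + 1, and if f v > f w then rnk big
      rcases lt_trichotomy (f v) (f w) with h | h | h
      · -- filters agree
        have : (F.filter fun z => f z < f v) = ((F.erase w).filter fun z => f z < f v) := by
          ext z
          simp only [Finset.mem_filter, Finset.mem_erase]
          constructor
          · rintro ⟨hzF, hz⟩
            refine ⟨⟨?_, hzF⟩, hz⟩
            intro hzw; subst hzw; exact absurd (lt_trans hz h) (lt_irrefl _)
          · rintro ⟨⟨_, hzF⟩, hz⟩; exact ⟨hzF, hz⟩
        unfold rnk at hr ⊢
        rw [this]; exact hr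
      · exact absurd (hinj hvF hwF h) hvw
      · -- f w < f v: then rnk F f v ≥ rnk F f w + 1 ≥ t+1, but then also erase-rank ≥ t, contra
        exfalso
        have h1 : rnk F f w < rnk F f v := rnk_lt_rnk hwF h
        have h2 : rnk F f v ≤ rnk (F.erase w) f v + 1 := by
          unfold rnk
          have : (F.filter fun z => f z < f v) ⊆
              insert w ((F.erase w).filter fun z => f z < f v) := by
            intro z hz
            simp only [Finset.mem_filter] at hz
            by_cases hzw : z = w
            · subst hzw; exact Finset.mem_insert_self _ _
            · exact Finset.mem_insert_of_mem (Finset.mem_filter.2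
                ⟨Finset.mem_erase.2 ⟨hzw, hz.1⟩, hz.2⟩)
          calc (F.filter fun z => f z < f v).card
              ≤ (insert w ((F.erase w).filter fun z => f z < f v)).card :=
                Finset.card_le_card this
            _ ≤ ((F.erase w).filter fun z => f z < f v).card + 1 :=
                Finset.card_insert_le _ _
        omega
    · rintro ⟨hvF, hr⟩
      have hvw : v ≠ w := by
        intro h; subst h
        exact absurd hr (not_lt.2 hrw)
      refine ⟨⟨hvw, hvF⟩, ?_⟩
      unfold rnk at hr ⊢
      calc ((F.erase w).filter fun z => f z < f v).card
          ≤ (F.filter fun z => f z < f v).card :=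
            Finset.card_le_card (Finset.filter_subset_filter _ (Finset.erase_subset _ _))
        _ < t := hr
  · rw [Finset.erase_eq_of_notMem hwF]

end Rank

section MS
variable {ι : Type*} [DecidableEq ι]

lemma iff_lt_left {p q d : ℝ} (hpq : p ≤ q) (hd : d < p ∨ q < d) : (d < p ↔ d < q) := by
  constructor
  · intro h; exact lt_of_lt_of_le h hpq
  · intro h; rcases hd with h' | h'
    · exact h'
    · linarith
lemma iff_lt_right {p q d : ℝ} (hpq : p ≤ q) (hd : d < p ∨ q < d) : (p < d ↔ q < d) := by
  constructor
  · intro h; rcases hd with h' | h'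
    · linarith
    · exact h'
  · intro h; exact lt_of_le_of_lt hpq h

variable (V : Finset ι) (x l u : ι → ℝ)

/-- all endpoint values of the vertical intervals -/
noncomputable def Ends : Finset ℝ := V.biUnion (fun w => {l w, u w})

lemma l_mem_Ends {w : ι} (hw : w ∈ V) : l w ∈ Ends V l u := by
  simp only [Ends, Finset.mem_biUnion]; exact ⟨w, hw, by simp⟩

lemma u_mem_Ends {w : ι} (hw : w ∈ V) : u w ∈ Ends V l u := by
  simp only [Ends, Finset.mem_biUnion]; exact ⟨w, hw, by simp⟩

lemma mem_Ends_iff {e : ℝ} : e ∈ Ends V l u ↔ ∃ w ∈ V, e = l w ∨ e = u w := by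
  simp [Ends]

/-- stabbers strictly to the right of `v₀` at height `y` -/
noncomputable def Sst (v₀ : ι) (y : ℝ) : Finset ι :=
  V.filter fun w => x v₀ < x w ∧ l w < y ∧ y < u w

/-- the `t` nearest right-stabbers -/
noncomputable def Wv (t : ℕ) (v₀ : ι) (y : ℝ) : Finset ι := wop (Sst V x l u v₀ y) x t

lemma Wv_subset_Sst (t : ℕ) (v₀ : ι) (y : ℝ) : Wv V x l u t v₀ y ⊆ Sst V x l u v₀ y :=
  wop_subset _ _ _

lemma Sst_subset (v₀ : ι) (y : ℝ) : Sst V x l u v₀ y ⊆ V := Finset.filter_subset _ _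

/-- transfer: if no endpoint lies in `[p,q]` then stab sets at `p` and `q` agree -/
lemma Sst_congr (v₀ : ι) {p q : ℝ} (hpq : p ≤ q)
    (hno : ∀ w ∈ V, (l w < p ∨ q < l w) ∧ (u w < p ∨ q < u w)) :
    Sst V x l u v₀ p = Sst V x l u v₀ q := by
  unfold Sst
  ext w
  simp only [Finset.mem_filter]
  constructor
  · rintro ⟨hwV, hx, hl, hu⟩
    exact ⟨hwV, hx, (iff_lt_left hpq (hno w hwV).1).1 hl,
      (iff_lt_right hpq (hno w hwV).2).1 hu⟩
  · rintro ⟨hwV, hx, hl, hu⟩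
    exact ⟨hwV, hx, (iff_lt_left hpq (hno w hwV).1).2 hl,
      (iff_lt_right hpq (hno w hwV).2).2 hu⟩

/-- if the nearest-`t` sets at `p` and `q` differ and only `we`'s endpoints may lie
in `[p,q]`, then `we` belongs to one of the two sets -/
lemma Wv_change_mem (t : ℕ) (v₀ : ι) {p q : ℝ} (hpq : p ≤ q) {we : ι}
    (hinj : Set.InjOn x V)
    (hno : ∀ w ∈ V, w ≠ we → (l w < p ∨ q < l w) ∧ (u w < p ∨ q < u w))
    (hne : Wv V x l u t v₀ p ≠ Wv V x l u t v₀ q) :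
    we ∈ Wv V x l u t v₀ p ∨ we ∈ Wv V x l u t v₀ q := by
  by_contra hc
  push_neg at hc
  apply hne
  have hAB : (Sst V x l u v₀ p).erase we = (Sst V x l u v₀ q).erase we := by
    ext w
    simp only [Finset.mem_erase, Sst, Finset.mem_filter]
    constructor
    · rintro ⟨hwe, hwV, hx, hl, hu⟩
      exact ⟨hwe, hwV, hx, (iff_lt_left hpq (hno w hwV hwe).1).1 hl,
        (iff_lt_right hpq (hno w hwV hwe).2).1 hu⟩
    · rintro ⟨hwe, hwV, hx, hl, hu⟩
      exact ⟨hwe, hwV, hx, (iff_lt_left hpq (hno w hwV hwe).1).2 hl,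
        (iff_lt_right hpq (hno w hwV hwe).2).2 hu⟩
  have hinjp : Set.InjOn x (Sst V x l u v₀ p) :=
    hinj.mono (by exact_mod_cast Finset.coe_subset.2 (Sst_subset V x l u v₀ p))
  have hinjq : Set.InjOn x (Sst V x l u v₀ q) :=
    hinj.mono (by exact_mod_cast Finset.coe_subset.2 (Sst_subset V x l u v₀ q))
  calc Wv V x l u t v₀ p = wop ((Sst V x l u v₀ p).erase we) x t := (wop_erase hinjp hc.1).symm
    _ = wop ((Sst V x l u v₀ q).erase we) x t := by rw [hAB]
    _ = Wv V x l u t v₀ q := wop_erase hinjq hc.2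

noncomputable def prevE (e : ℝ) : ℝ :=
  if h : ((Ends V l u).filter (fun z => z < e)).Nonempty
  then ((Ends V l u).filter (fun z => z < e)).max' h else e - 1

noncomputable def nextE (e : ℝ) : ℝ :=
  if h : ((Ends V l u).filter (fun z => e < z)).Nonempty
  then ((Ends V l u).filter (fun z => e < z)).min' h else e + 1

lemma prevE_lt (e : ℝ) : prevE V l u e < e := by
  unfold prevE
  split_ifs with h
  · have := Finset.max'_mem _ h
    simp only [Finset.mem_filter] at this
    exact this.2
  · linarith

lemma nextE_gt (e : ℝ) : e < nextE V l u e := by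
  unfold nextE
  split_ifs with h
  · have := Finset.min'_mem _ h
    simp only [Finset.mem_filter] at this
    exact this.2
  · linarith

lemma le_prevE {e d : ℝ} (hd : d ∈ Ends V l u) (hde : d < e) : d ≤ prevE V l u e := by
  have hdm : d ∈ (Ends V l u).filter (fun z => z < e) := Finset.mem_filter.2 ⟨hd, hde⟩
  unfold prevE
  rw [dif_pos ⟨d, hdm⟩]
  exact Finset.le_max' _ _ hdm

lemma nextE_le {e d : ℝ} (hd : d ∈ Ends V l u) (hde : e < d) : nextE V l u e ≤ d := by
  have hdm : d ∈ (Ends V l u).filter (fun z => e < z) := Finset.mem_filter.2 ⟨hd, hde⟩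
  unfold nextE
  rw [dif_pos ⟨d, hdm⟩]
  exact Finset.min'_le _ _ hdm

noncomputable def mlo (e : ℝ) : ℝ := (prevE V l u e + e) / 2
noncomputable def mhi (e : ℝ) : ℝ := (e + nextE V l u e) / 2

lemma mlo_lt (e : ℝ) : mlo V l u e < e := by
  have := prevE_lt V l u e; unfold mlo; linarith

lemma prevE_lt_mlo (e : ℝ) : prevE V l u e < mlo V l u e := by
  have := prevE_lt V l u e; unfold mlo; linarith

lemma mhi_gt (e : ℝ) : e < mhi V l u e := by
  have := nextE_gt V l u e; unfold mhi; linarith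

lemma mhi_lt_nextE (e : ℝ) : mhi V l u e < nextE V l u e := by
  have := nextE_gt V l u e; unfold mhi; linarith

/-- endpoint of an event -/
noncomputable def ept (w : ι) (s : Bool) : ℝ := if s then u w else l w

/-- canonical sample point of an event -/
noncomputable def ySt (w : ι) (s : Bool) : ℝ :=
  if s then mlo V l u (u w) else mhi V l u (l w)

/-- active event: `w`'s endpoint event (side `s`) is "seen" by `v₀` -/
def AE (t : ℕ) (v₀ : ι) (w : ι) (s : Bool) : Prop :=
  (l v₀ < ySt V l u w s ∧ ySt V l u w s < u v₀) ∧
    w ∈ Wv V x l u t v₀ (ySt V l u w s)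

/-- each event is active for at most `t` verticals -/
lemma AE_count (t : ℕ) (hinj : Set.InjOn x V) (w : ι) (s : Bool) :
    (V.filter fun v₀ => AE V x l u t v₀ w s).card ≤ t := by
  classical
  set y0 := ySt V l u w s with hy0
  have hset : ∀ v₀ : ι,
      (V.filter fun w' => (l w' < y0 ∧ y0 < u w') ∧ x v₀ < x w' ∧ x w' < x w)
        = ((Sst V x l u v₀ y0).filter fun w' => x w' < x w) := by
    intro v₀
    unfold Sst
    rw [Finset.filter_filter]
    ext z
    simp only [Finset.mem_filter]
    tauto
  set c : ι → ℕ := fun v₀ =>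
    (V.filter fun w' => (l w' < y0 ∧ y0 < u w') ∧ x v₀ < x w' ∧ x w' < x w).card with hc
  have hclt : ∀ v₀ ∈ V.filter fun v₀ => AE V x l u t v₀ w s, c v₀ < t := by
    intro v₀ hv₀
    simp only [Finset.mem_filter] at hv₀
    have hmem := hv₀.2.2
    have hrnk : rnk (Sst V x l u v₀ y0) x w < t := (Finset.mem_filter.1 hmem).2
    have : c v₀ = rnk (Sst V x l u v₀ y0) x w := by
      rw [hc]; simp only []; rw [hset v₀]; rfl
    rw [this]; exact hrnk
  have hinjc : Set.InjOn c (V.filter fun v₀ => AE V x l u t v₀ w s) := by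
    intro v₀ h₀ v₁ h₁ hc01
    simp only [Finset.coe_filter, Set.mem_setOf_eq] at h₀ h₁
    by_contra hne
    have hx01 : x v₀ ≠ x v₁ := fun h => hne (hinj h₀.1 h₁.1 h)
    have key : ∀ va vb, va ∈ V → vb ∈ V → AE V x l u t va w s → AE V x l u t vb w s →
        x va < x vb → c vb < c va := by
      intro va vb hvaV hvbV _ hbe hxab
      have hsub : (V.filter fun w' => (l w' < y0 ∧ y0 < u w') ∧ x vb < x w' ∧ x w' < x w)
          ⊆ (V.filter fun w' => (l w' < y0 ∧ y0 < u w') ∧ x va < x w' ∧ x w' < x w) := by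
        intro z hz
        simp only [Finset.mem_filter] at hz ⊢
        exact ⟨hz.1, hz.2.1, lt_trans hxab hz.2.2.1, hz.2.2.2⟩
      have hvbmem : vb ∈ V.filter fun w' => (l w' < y0 ∧ y0 < u w') ∧ x va < x w' ∧ x w' < x w := by
        simp only [Finset.mem_filter]
        have hstab := hbe.1
        have hxw : x vb < x w := by
          have := Wv_subset_Sst V x l u t vb y0 hbe.2
          simp only [Sst, Finset.mem_filter] at this
          exact this.2.1
        exact ⟨hvbV, ⟨hstab.1, hstab.2⟩, hxab, hxw⟩
      have hvbnot : vb ∉ V.filter fun w' => (l w' < y0 ∧ y0 < u w') ∧ x vb < x w' ∧ x w' < x w := by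
        simp only [Finset.mem_filter]
        rintro ⟨_, _, hlt, _⟩
        exact absurd hlt (lt_irrefl _)
      exact Finset.card_lt_card ⟨hsub, fun hss => hvbnot (hss hvbmem)⟩
    rcases lt_or_gt_of_ne hx01 with h | h
    · exact absurd hc01.symm (Nat.ne_of_lt (key v₀ v₁ h₀.1 h₁.1 h₀.2 h₁.2 h))
    · exact absurd hc01 (Nat.ne_of_lt (key v₁ v₀ h₁.1 h₀.1 h₁.2 h₀.2 h))
  calc (V.filter fun v₀ => AE V x l u t v₀ w s).card
      ≤ (Finset.range t).card := by
        apply Finset.card_le_card_of_injOn c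
        · intro v₀ hv₀; exact Finset.mem_range.2 (hclt v₀ hv₀)
        · exact hinjc
    _ = t := Finset.card_range t

end MS

section MS2
variable {ι : Type*} [DecidableEq ι]
variable (V : Finset ι) (x l u : ι → ℝ)

lemma Sst_congr' (v₀ : ι) (p q : ℝ)
    (hno : ∀ d ∈ Ends V l u, d < min p q ∨ max p q < d) :
    Sst V x l u v₀ p = Sst V x l u v₀ q := by
  unfold Sst
  ext w
  simp only [Finset.mem_filter]
  constructor <;> rintro ⟨hwV, hx, hl, hu⟩ <;> refine ⟨hwV, hx, ?_, ?_⟩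
  · rcases hno (l w) (l_mem_Ends V l u hwV) with h | h
    · exact lt_of_lt_of_le h (min_le_right _ _)
    · exact absurd hl (not_lt.2 (le_trans (le_max_left _ _) (le_of_lt h)))
  · rcases hno (u w) (u_mem_Ends V l u hwV) with h | h
    · exact absurd hu (not_lt.2 (le_trans (le_of_lt h) (min_le_left _ _)))
    · exact lt_of_le_of_lt (le_max_right _ _) h
  · rcases hno (l w) (l_mem_Ends V l u hwV) with h | h
    · exact lt_of_lt_of_le h (min_le_left _ _)
    · exact absurd hl (not_lt.2 (le_trans (le_max_right _ _) (le_of_lt h)))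
  · rcases hno (u w) (u_mem_Ends V l u hwV) with h | h
    · exact absurd hu (not_lt.2 (le_trans (le_of_lt h) (min_le_right _ _)))
    · exact lt_of_le_of_lt (le_max_left _ _) h

lemma Wv_congr' (t : ℕ) (v₀ : ι) (p q : ℝ)
    (hno : ∀ d ∈ Ends V l u, d < min p q ∨ max p q < d) :
    Wv V x l u t v₀ p = Wv V x l u t v₀ q := by
  unfold Wv
  rw [Sst_congr' V x l u v₀ p q hno]

lemma Wv_mem_stab {t : ℕ} {v₀ w : ι} {y : ℝ} (h : w ∈ Wv V x l u t v₀ y) :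
    w ∈ V ∧ x v₀ < x w ∧ l w < y ∧ y < u w := by
  have := Wv_subset_Sst V x l u t v₀ y h
  simp only [Sst, Finset.mem_filter] at this
  exact ⟨this.1, this.2⟩

/-- main induction: a change in the nearest-`t` set between two heights inside `v₀`'s
interval forces an active event whose endpoint lies between the heights -/
lemma change_event (t : ℕ) (hinj : Set.InjOn x V)
    (hends : ∀ w ∈ V, ∀ w' ∈ V, w ≠ w' →
      l w ≠ l w' ∧ l w ≠ u w' ∧ u w ≠ l w' ∧ u w ≠ u w')
    {v₀ : ι} (hv₀ : v₀ ∈ V) :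
    ∀ N : ℕ, ∀ z z' : ℝ,
      ((Ends V l u).filter (fun d => z ≤ d ∧ d ≤ z')).card ≤ N →
      l v₀ < z → z < z' → z' < u v₀ →
      Wv V x l u t v₀ z ≠ Wv V x l u t v₀ z' →
      ∃ w s, AE V x l u t v₀ w s ∧ z ≤ ept l u w s ∧ ept l u w s ≤ z' := by
  intro N
  induction N with
  | zero =>
    intro z z' hcard hz hzz' hz' hne
    exfalso
    apply hne
    apply Wv_congr'
    intro d hd
    have : d ∉ (Ends V l u).filter (fun d => z ≤ d ∧ d ≤ z') := by
      intro hmem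
      have := Finset.card_pos.2 ⟨d, hmem⟩
      omega
    simp only [Finset.mem_filter, hd, true_and, not_and, not_le] at this
    rw [min_eq_left (le_of_lt hzz'), max_eq_right (le_of_lt hzz')]
    by_cases h : z ≤ d
    · exact Or.inr (this h)
    · exact Or.inl (not_le.1 h)
  | succ N ih =>
    intro z z' hcard hz hzz' hz' hne
    set F := (Ends V l u).filter (fun d => z ≤ d ∧ d ≤ z') with hF
    by_cases hFne : F.Nonempty
    case neg =>
      exfalso
      apply hne
      apply Wv_congr'
      intro d hd
      have : d ∉ F := fun hmem => hFne ⟨d, hmem⟩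
      rw [hF] at this
      simp only [Finset.mem_filter, hd, true_and, not_and, not_le] at this
      rw [min_eq_left (le_of_lt hzz'), max_eq_right (le_of_lt hzz')]
      by_cases h : z ≤ d
      · exact Or.inr (this h)
      · exact Or.inl (not_le.1 h)
    case pos =>
    set e := F.min' hFne with he_def
    have heF : e ∈ F := Finset.min'_mem _ _
    have heEnds : e ∈ Ends V l u := (Finset.mem_filter.1 heF).1
    have hze : z ≤ e := (Finset.mem_filter.1 heF).2.1
    have hez' : e ≤ z' := (Finset.mem_filter.1 heF).2.2
    have hemin : ∀ d ∈ Ends V l u, z ≤ d → d ≤ z' → e ≤ d := by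
      intro d hd h1 h2
      exact Finset.min'_le _ _ (Finset.mem_filter.2 ⟨hd, h1, h2⟩)
    obtain ⟨we, hweV, howner⟩ := (mem_Ends_iff V l u).1 heEnds
    -- gap structure around e
    have hlv0e : l v₀ < e := lt_of_lt_of_le hz hze
    have huv0e : e < u v₀ := lt_of_le_of_lt hez' hz'
    have hpe_ge : l v₀ ≤ prevE V l u e := le_prevE V l u (l_mem_Ends V l u hv₀) hlv0e
    have hnx_le : nextE V l u e ≤ u v₀ := nextE_le V l u (u_mem_Ends V l u hv₀) huv0e
    have hpe_lt_z : prevE V l u e < z := by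
      by_contra hcon
      push_neg at hcon
      -- then prevE e ∈ F and < e : contradicts minimality
      have hpeE : prevE V l u e ∈ Ends V l u := by
        unfold prevE
        have hne' : ((Ends V l u).filter (fun d => d < e)).Nonempty :=
          ⟨l v₀, Finset.mem_filter.2 ⟨l_mem_Ends V l u hv₀, hlv0e⟩⟩
        rw [dif_pos hne']
        exact (Finset.mem_filter.1 (Finset.max'_mem _ hne')).1
      have h1 := prevE_lt V l u e
      have := hemin _ hpeE hcon (le_trans (le_of_lt h1) hez')
      linarith
    have hno_between_lo : ∀ d ∈ Ends V l u, d < e → d ≤ prevE V l u e :=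
      fun d hd hde => le_prevE V l u hd hde
    have hno_between_hi : ∀ d ∈ Ends V l u, e < d → nextE V l u e ≤ d :=
      fun d hd hde => nextE_le V l u hd hde
    set m1 := mlo V l u e with hm1_def
    set m2 := mhi V l u e with hm2_def
    have hm1_lt_e : m1 < e := mlo_lt V l u e
    have hpe_lt_m1 : prevE V l u e < m1 := prevE_lt_mlo V l u e
    have he_lt_m2 : e < m2 := mhi_gt V l u e
    have hm2_lt_nx : m2 < nextE V l u e := mhi_lt_nextE V l u e
    have hlv0m1 : l v₀ < m1 := lt_of_le_of_lt hpe_ge hpe_lt_m1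
    have hm1uv0 : m1 < u v₀ := lt_trans hm1_lt_e huv0e
    have hlv0m2 : l v₀ < m2 := lt_trans hlv0e he_lt_m2
    have hm2uv0 : m2 < u v₀ := lt_of_lt_of_le hm2_lt_nx hnx_le
    -- endpoints of verticals other than we avoid a nbhd of e
    have hother : ∀ w ∈ V, w ≠ we →
        (l w ≤ prevE V l u e ∨ nextE V l u e ≤ l w) ∧
        (u w ≤ prevE V l u e ∨ nextE V l u e ≤ u w) := by
      intro w hwV hwne
      have hd := hends w hwV we hweV hwne
      constructor
      · rcases lt_trichotomy (l w) e with h | h | h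
        · exact Or.inl (hno_between_lo _ (l_mem_Ends V l u hwV) h)
        · exfalso; rcases howner with h' | h'
          · exact hd.1 (h.trans h')
          · exact hd.2.1 (h.trans h')
        · exact Or.inr (hno_between_hi _ (l_mem_Ends V l u hwV) h)
      · rcases lt_trichotomy (u w) e with h | h | h
        · exact Or.inl (hno_between_lo _ (u_mem_Ends V l u hwV) h)
        · exfalso; rcases howner with h' | h'
          · exact hd.2.2.1 (h.trans h')
          · exact hd.2.2.2 (h.trans h')
        · exact Or.inr (hno_between_hi _ (u_mem_Ends V l u hwV) h)
    -- step 3 (common): if Wv z = Wv m2 then either transfer-contradiction or recurse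
    have step3 : Wv V x l u t v₀ z = Wv V x l u t v₀ m2 → e < z' →
        ∃ w s, AE V x l u t v₀ w s ∧ z ≤ ept l u w s ∧ ept l u w s ≤ z' := by
      intro heqm2 hez'lt
      by_cases hm2z' : z' ≤ m2
      · -- transfer between z' and m2: both in (e, nextE e)
        exfalso
        apply hne
        rw [heqm2]
        apply Wv_congr'
        intro d hd
        rcases lt_or_ge d (nextE V l u e) with h | h
        · -- d < nextE: then d ≤ e < min m2 z'
          left
          have hde : d ≤ e := by
            by_contra hcon
            push_neg at hcon
            exact absurd (hno_between_hi d hd hcon) (not_le.2 h)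
          have h1 : d < z' := lt_of_le_of_lt hde hez'lt
          have h2 : d < m2 := lt_of_le_of_lt hde he_lt_m2
          exact lt_min h2 h1
        · right
          calc max m2 z' ≤ m2 := max_le (le_refl _) hm2z'
            _ < nextE V l u e := hm2_lt_nx
            _ ≤ d := h
      · push_neg at hm2z'
        -- recurse on (m2, z')
        have hcard' : ((Ends V l u).filter (fun d => m2 ≤ d ∧ d ≤ z')).card ≤ N := by
          have hsub : (Ends V l u).filter (fun d => m2 ≤ d ∧ d ≤ z') ⊆ F.erase e := by
            intro d hd
            simp only [Finset.mem_filter] at hd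
            refine Finset.mem_erase.2 ⟨?_, ?_⟩
            · intro hdeq; subst hdeq
              exact absurd hd.2.1 (not_le.2 he_lt_m2)
            · rw [hF]
              exact Finset.mem_filter.2 ⟨hd.1,
                le_trans (le_of_lt (lt_of_le_of_lt hze he_lt_m2)) hd.2.1, hd.2.2⟩
          have h1 : (F.erase e).card < F.card := Finset.card_erase_lt_of_mem heF
          have h2 := Finset.card_le_card hsub
          omega
        obtain ⟨w, s, hAE, h1, h2⟩ := ih m2 z' hcard' hlv0m2 hm2z' hz'
          (by rw [← heqm2]; exact hne)
        exact ⟨w, s, hAE, le_trans (le_of_lt (lt_of_le_of_lt hze he_lt_m2)) h1, h2⟩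
    -- helper: endpoints of other verticals avoid the interval around e
    have hnoAB : ∀ (p q : ℝ), prevE V l u e < p → q < nextE V l u e →
        ∀ w ∈ V, w ≠ we → (l w < p ∨ q < l w) ∧ (u w < p ∨ q < u w) := by
      intro p q hp hq w hwV hwne
      obtain ⟨h1, h2⟩ := hother w hwV hwne
      constructor
      · rcases h1 with h | h
        · exact Or.inl (lt_of_le_of_lt h hp)
        · exact Or.inr (lt_of_lt_of_le hq h)
      · rcases h2 with h | h
        · exact Or.inl (lt_of_le_of_lt h hp)
        · exact Or.inr (lt_of_lt_of_le hq h)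
    have hyS_true : ySt V l u we true = mlo V l u (u we) := rfl
    have hyS_false : ySt V l u we false = mhi V l u (l we) := rfl
    have hep_true : ept l u we true = u we := rfl
    have hep_false : ept l u we false = l we := rfl
    rcases eq_or_lt_of_le hze with hzeq | hzlt
    · -- CASE B : z = e
      have hez'lt : e < z' := hzeq ▸ hzz'
      by_cases heq : Wv V x l u t v₀ z = Wv V x l u t v₀ m2
      · exact step3 heq hez'lt
      · have hmem := Wv_change_mem V x l u t v₀ (we := we)
          (le_of_lt (hzeq ▸ he_lt_m2 : z < m2)) hinj
          (hnoAB z m2 hpe_lt_z hm2_lt_nx) heq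
        rcases howner with hlwe | huwe
        · -- e = l we : membership at z impossible
          rcases hmem with hmem | hmem
          · exfalso
            have hstab := (Wv_mem_stab V x l u hmem).2.2.1
            rw [← hlwe] at hstab
            rw [← hzeq] at hstab
            exact absurd hstab (lt_irrefl z)
          · -- event (we, false)
            have hyS : ySt V l u we false = m2 := by rw [hyS_false, ← hlwe]
            have hep : ept l u we false = e := by rw [hep_false, ← hlwe]
            refine ⟨we, false, ⟨⟨?_, ?_⟩, ?_⟩, ?_, ?_⟩
            · rw [hyS]; exact hlv0m2
            · rw [hyS]; exact hm2uv0
            · rw [hyS]; exact hmem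
            · rw [hep]; exact hze
            · rw [hep]; exact hez'
        · -- e = u we : both memberships impossible ⇒ Wv z = Wv m2, contradiction with heq
          exfalso
          rcases hmem with hmem | hmem
          · have hstab := (Wv_mem_stab V x l u hmem).2.2.2
            rw [← huwe, ← hzeq] at hstab
            exact absurd hstab (lt_irrefl z)
          · have hstab := (Wv_mem_stab V x l u hmem).2.2.2
            rw [← huwe] at hstab
            exact absurd hstab (not_lt.2 (le_of_lt he_lt_m2))
    · -- CASE A : z < e
      have hC1 : Wv V x l u t v₀ z = Wv V x l u t v₀ m1 := by
        apply Wv_congr'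
        intro d hd
        rcases lt_or_ge d e with h | h
        · left
          have hdpe : d ≤ prevE V l u e := hno_between_lo d hd h
          exact lt_min (lt_of_le_of_lt hdpe hpe_lt_z) (lt_of_le_of_lt hdpe hpe_lt_m1)
        · right
          exact lt_of_lt_of_le (max_lt hzlt hm1_lt_e) h
      rcases eq_or_lt_of_le hez' with hz'eq | hez'lt
      · -- z' = e  (hz'eq : e = z')
        have hmem := Wv_change_mem V x l u t v₀ (we := we) (le_of_lt hzz') hinj
          (by
            intro w hwV hwne
            obtain ⟨h1, h2⟩ := hother w hwV hwne
            constructor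
            · rcases h1 with h | h
              · exact Or.inl (lt_of_le_of_lt h hpe_lt_z)
              · exact Or.inr (lt_of_lt_of_le (hz'eq ▸ nextE_gt V l u e) h)
            · rcases h2 with h | h
              · exact Or.inl (lt_of_le_of_lt h hpe_lt_z)
              · exact Or.inr (lt_of_lt_of_le (hz'eq ▸ nextE_gt V l u e) h)) hne
        rcases howner with hlwe | huwe
        · exfalso
          rcases hmem with hmem | hmem
          · have hstab := (Wv_mem_stab V x l u hmem).2.2.1
            rw [← hlwe] at hstab
            linarith
          · have hstab := (Wv_mem_stab V x l u hmem).2.2.1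
            rw [← hlwe, ← hz'eq] at hstab
            exact absurd hstab (lt_irrefl e)
        · rcases hmem with hmem | hmem
          · -- event (we, true) with membership transported via hC1
            have hmem1 : we ∈ Wv V x l u t v₀ m1 := hC1 ▸ hmem
            have hyS : ySt V l u we true = m1 := by rw [hyS_true, ← huwe]
            have hep : ept l u we true = e := by rw [hep_true, ← huwe]
            refine ⟨we, true, ⟨⟨?_, ?_⟩, ?_⟩, ?_, ?_⟩
            · rw [hyS]; exact hlv0m1
            · rw [hyS]; exact hm1uv0
            · rw [hyS]; exact hmem1
            · rw [hep]; exact hze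
            · rw [hep]; exact hez'
          · exfalso
            have hstab := (Wv_mem_stab V x l u hmem).2.2.2
            rw [← huwe, ← hz'eq] at hstab
            exact absurd hstab (lt_irrefl e)
      · -- e < z'
        by_cases heqm : Wv V x l u t v₀ m1 = Wv V x l u t v₀ m2
        · exact step3 (hC1.trans heqm) hez'lt
        · have hmem := Wv_change_mem V x l u t v₀ (we := we)
            (le_of_lt (lt_trans hm1_lt_e he_lt_m2)) hinj
            (hnoAB m1 m2 hpe_lt_m1 hm2_lt_nx) heqm
          rcases howner with hlwe | huwe
          · rcases hmem with hmem | hmem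
            · exfalso
              have hstab := (Wv_mem_stab V x l u hmem).2.2.1
              rw [← hlwe] at hstab
              linarith
            · have hyS : ySt V l u we false = m2 := by rw [hyS_false, ← hlwe]
              have hep : ept l u we false = e := by rw [hep_false, ← hlwe]
              refine ⟨we, false, ⟨⟨?_, ?_⟩, ?_⟩, ?_, ?_⟩
              · rw [hyS]; exact hlv0m2
              · rw [hyS]; exact hm2uv0
              · rw [hyS]; exact hmem
              · rw [hep]; exact hze
              · rw [hep]; exact hez'
          · rcases hmem with hmem | hmem
            · have hyS : ySt V l u we true = m1 := by rw [hyS_true, ← huwe]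
              have hep : ept l u we true = e := by rw [hep_true, ← huwe]
              refine ⟨we, true, ⟨⟨?_, ?_⟩, ?_⟩, ?_, ?_⟩
              · rw [hyS]; exact hlv0m1
              · rw [hyS]; exact hm1uv0
              · rw [hyS]; exact hmem
              · rw [hep]; exact hze
              · rw [hep]; exact hez'
            · exfalso
              have hstab := (Wv_mem_stab V x l u hmem).2.2.2
              rw [← huwe] at hstab
              linarith

end MS2

section Walk
variable {β : Type*} [DecidableEq β]

/-- adjacent pairs of `Z` where `g` changes value -/
noncomputable def CHpairs (Z : Finset ℝ) (g : ℝ → β) : Finset (ℝ × ℝ) :=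
  (Z ×ˢ Z).filter fun p => p.1 < p.2 ∧ g p.1 ≠ g p.2 ∧ ∀ w ∈ Z, ¬ (p.1 < w ∧ w < p.2)

lemma image_card_le_CHpairs (Z : Finset ℝ) (g : ℝ → β) :
    (Z.image g).card ≤ 1 + (CHpairs Z g).card := by
  classical
  induction Z using Finset.induction_on_max with
  | empty => simp
  | insert M Z' hlt ih =>
    have hMnotin : M ∉ Z' := fun h => absurd (hlt M h) (lt_irrefl M)
    have hCHmono : CHpairs Z' g ⊆ CHpairs (insert M Z') g := by
      intro p hp
      simp only [CHpairs, Finset.mem_filter, Finset.mem_product] at hp ⊢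
      obtain ⟨⟨h1, h2⟩, h3, h4, h5⟩ := hp
      refine ⟨⟨Finset.mem_insert_of_mem h1, Finset.mem_insert_of_mem h2⟩, h3, h4, ?_⟩
      intro w hw
      rcases Finset.mem_insert.1 hw with hw | hw
      · subst hw
        rintro ⟨_, hwp2⟩
        exact absurd (hlt _ h2) (not_lt.2 (le_of_lt hwp2))
      · exact h5 w hw
    rcases Finset.eq_empty_or_nonempty Z' with hZ' | hZ'
    · subst hZ'; simp
    · set M' := Z'.max' hZ' with hM'
      have hM'mem : M' ∈ Z' := Finset.max'_mem _ _
      by_cases hg : g M ∈ Z'.image g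
      · have : (insert M Z').image g = Z'.image g := by
          rw [Finset.image_insert, Finset.insert_eq_of_mem hg]
        rw [this]
        exact le_trans ih (by
          have := Finset.card_le_card hCHmono
          omega)
      · have himg : (insert M Z').image g = insert (g M) (Z'.image g) := Finset.image_insert _ _ _
        have hnew : (M', M) ∈ CHpairs (insert M Z') g := by
          simp only [CHpairs, Finset.mem_filter, Finset.mem_product]
          refine ⟨⟨Finset.mem_insert_of_mem hM'mem, Finset.mem_insert_self _ _⟩,
            hlt _ hM'mem, ?_, ?_⟩
          · intro h
            exact hg (h ▸ Finset.mem_image_of_mem g hM'mem)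
          · intro w hw
            rcases Finset.mem_insert.1 hw with hw | hw
            · subst hw; rintro ⟨_, h⟩; exact absurd h (lt_irrefl _)
            · rintro ⟨h1, _⟩
              exact absurd (Finset.le_max' _ _ hw) (not_le.2 h1)
        have hnewnot : (M', M) ∉ CHpairs Z' g := by
          simp only [CHpairs, Finset.mem_filter, Finset.mem_product]
          rintro ⟨⟨_, h⟩, _⟩
          exact hMnotin h
        have hcard : (CHpairs Z' g).card + 1 ≤ (CHpairs (insert M Z') g).card := by
          have : insert (M', M) (CHpairs Z' g) ⊆ CHpairs (insert M Z') g := by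
            intro p hp
            rcases Finset.mem_insert.1 hp with hp | hp
            · subst hp; exact hnew
            · exact hCHmono hp
          calc (CHpairs Z' g).card + 1 = (insert (M', M) (CHpairs Z' g)).card :=
                (Finset.card_insert_of_notMem hnewnot).symm
            _ ≤ _ := Finset.card_le_card this
        rw [himg]
        calc (insert (g M) (Z'.image g)).card ≤ (Z'.image g).card + 1 :=
              Finset.card_insert_le _ _
          _ ≤ 1 + (CHpairs Z' g).card + 1 := by omega
          _ ≤ 1 + (CHpairs (insert M Z') g).card := by omega

end Walk

section LongRPrep
variable {ι : Type*} [DecidableEq ι]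
variable (V : Finset ι) (x l u : ι → ℝ) (t : ℕ)

/-- the finset of active events for `v₀` -/
noncomputable def EVs (v₀ : ι) : Finset (ι × Bool) :=
  (V ×ˢ ({true, false} : Finset Bool)).filter fun q => AE V x l u t v₀ q.1 q.2

lemma CH_le_two_EV (hinj : Set.InjOn x V)
    (hends : ∀ w ∈ V, ∀ w' ∈ V, w ≠ w' →
      l w ≠ l w' ∧ l w ≠ u w' ∧ u w ≠ l w' ∧ u w ≠ u w')
    {v₀ : ι} (hv₀ : v₀ ∈ V) (Z : Finset ℝ)
    (hZ : ∀ z ∈ Z, l v₀ < z ∧ z < u v₀) :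
    (CHpairs Z (Wv V x l u t v₀)).card ≤ 2 * (EVs V x l u t v₀).card := by
  classical
  set g := Wv V x l u t v₀ with hg
  have hex : ∀ p ∈ CHpairs Z g, ∃ q : ι × Bool,
      q ∈ EVs V x l u t v₀ ∧ p.1 ≤ ept l u q.1 q.2 ∧ ept l u q.1 q.2 ≤ p.2 := by
    intro p hp
    simp only [CHpairs, Finset.mem_filter, Finset.mem_product] at hp
    obtain ⟨⟨hp1, hp2⟩, hlt, hne, _⟩ := hp
    have hb1 := hZ p.1 hp1
    have hb2 := hZ p.2 hp2
    obtain ⟨w, s, hAE, h1, h2⟩ := change_event V x l u t hinj hends hv₀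
      (Ends V l u).card p.1 p.2
      (Finset.card_le_card (Finset.filter_subset _ _)) hb1.1 hlt hb2.2 hne
    have hwV : w ∈ V := (Wv_mem_stab V x l u hAE.2).1
    refine ⟨(w, s), ?_, h1, h2⟩
    simp only [EVs, Finset.mem_filter, Finset.mem_product]
    refine ⟨⟨hwV, ?_⟩, hAE⟩
    cases s <;> simp
  set φ : ℝ × ℝ → ι × Bool := fun p =>
    if h : ∃ q : ι × Bool, q ∈ EVs V x l u t v₀ ∧ p.1 ≤ ept l u q.1 q.2 ∧ ept l u q.1 q.2 ≤ p.2
    then h.choose else (v₀, true) with hφdef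
  have hφ : ∀ p ∈ CHpairs Z g, φ p ∈ EVs V x l u t v₀ ∧
      p.1 ≤ ept l u (φ p).1 (φ p).2 ∧ ept l u (φ p).1 (φ p).2 ≤ p.2 := by
    intro p hp
    have h := hex p hp
    rw [hφdef]
    simp only [dif_pos h]
    exact h.choose_spec
  have hmap : ∀ p ∈ CHpairs Z g, φ p ∈ EVs V x l u t v₀ := fun p hp => (hφ p hp).1
  rw [Finset.card_eq_sum_card_fiberwise hmap]
  have hfiber : ∀ q ∈ EVs V x l u t v₀,
      ((CHpairs Z g).filter fun p => φ p = q).card ≤ 2 := by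
    intro q _
    set e := ept l u q.1 q.2 with he
    set Fib := (CHpairs Z g).filter fun p => φ p = q with hFib
    have hrange : ∀ p ∈ Fib, p.1 ≤ e ∧ e ≤ p.2 := by
      intro p hp
      simp only [hFib, Finset.mem_filter] at hp
      have := hφ p hp.1
      rw [hp.2] at this
      exact ⟨this.2.1, this.2.2⟩
    have hCHmem : ∀ p ∈ Fib, p.1 ∈ Z ∧ p.2 ∈ Z ∧ p.1 < p.2 ∧
        ∀ w ∈ Z, ¬ (p.1 < w ∧ w < p.2) := by
      intro p hp
      simp only [hFib, CHpairs, Finset.mem_filter, Finset.mem_product] at hp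
      exact ⟨hp.1.1.1, hp.1.1.2, hp.1.2.1, hp.1.2.2.2⟩
    have hpair : ∀ p ∈ Fib, ∀ p' ∈ Fib, p ≠ p' →
        (p.2 = e ∧ p'.1 = e) ∨ (p'.2 = e ∧ p.1 = e) := by
      intro p hp p' hp' hne
      obtain ⟨hZ1, hZ2, hlt, hadj⟩ := hCHmem p hp
      obtain ⟨hZ1', hZ2', hlt', hadj'⟩ := hCHmem p' hp'
      obtain ⟨hr1, hr2⟩ := hrange p hp
      obtain ⟨hr1', hr2'⟩ := hrange p' hp'
      rcases lt_trichotomy p.1 p'.1 with h | h | h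
      · have hp2le : p.2 ≤ p'.1 := by
          by_contra hc
          push_neg at hc
          exact hadj p'.1 hZ1' ⟨h, hc⟩
        have he2 : p.2 = e := le_antisymm (le_trans hp2le hr1') hr2
        have he1 : p'.1 = e := le_antisymm hr1' (le_trans hr2 hp2le)
        exact Or.inl ⟨he2, he1⟩
      · exfalso
        apply hne
        have h2 : p.2 = p'.2 := by
          rcases lt_trichotomy p.2 p'.2 with hh | hh | hh
          · exact absurd ⟨h ▸ hlt, hh⟩ (hadj' p.2 hZ2)
          · exact hh
          · exact absurd ⟨h.symm ▸ hlt', hh⟩ (hadj p'.2 hZ2')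
        exact Prod.ext h h2
      · have hp2le : p'.2 ≤ p.1 := by
          by_contra hc
          push_neg at hc
          exact hadj' p.1 hZ1 ⟨h, hc⟩
        have he2 : p'.2 = e := le_antisymm (le_trans hp2le hr1) hr2'
        have he1 : p.1 = e := le_antisymm hr1 (le_trans hr2' hp2le)
        exact Or.inr ⟨he2, he1⟩
    have hnb : ∀ p ∈ Fib, ¬ (p.1 = e ∧ p.2 = e) := by
      rintro p hp ⟨h1, h2⟩
      have := (hCHmem p hp).2.2.1
      rw [h1, h2] at this
      exact lt_irrefl e this
    by_contra hc
    push_neg at hc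
    have h3 : 2 < Fib.card := hc
    obtain ⟨p1, p2, p3, hp1, hp2, hp3, h12, h13, h23⟩ := Finset.two_lt_card_iff.1 h3
    rcases hpair p1 hp1 p2 hp2 h12 with ⟨ha2, hb1⟩ | ⟨hb2, ha1⟩
    · rcases hpair p1 hp1 p3 hp3 h13 with ⟨_, hc1⟩ | ⟨hc2, ha1⟩
      · rcases hpair p2 hp2 p3 hp3 h23 with ⟨hb2, _⟩ | ⟨hc2', hb1'⟩
        · exact hnb p2 hp2 ⟨hb1, hb2⟩
        · exact hnb p3 hp3 ⟨hc1, hc2'⟩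
      · exact hnb p1 hp1 ⟨ha1, ha2⟩
    · rcases hpair p1 hp1 p3 hp3 h13 with ⟨ha2, _⟩ | ⟨hc2, _⟩
      · exact hnb p1 hp1 ⟨ha1, ha2⟩
      · rcases hpair p2 hp2 p3 hp3 h23 with ⟨hb2', hc1⟩ | ⟨_, hb1⟩
        · exact hnb p3 hp3 ⟨hc1, hc2⟩
        · exact hnb p2 hp2 ⟨hb1, hb2⟩
  refine le_trans (Finset.sum_le_sum hfiber) ?_
  rw [Finset.sum_const, smul_eq_mul, mul_comm]

end LongRPrep

section ProdHelper
variable {α β : Type*} [DecidableEq α] [DecidableEq β]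

lemma prod_filter_card (A : Finset α) (B : Finset β) (Q : α → β → Prop)
    [DecidablePred fun p : α × β => Q p.1 p.2] [∀ v, DecidablePred fun h => Q v h] :
    ((A ×ˢ B).filter fun p => Q p.1 p.2).card
      = ∑ v ∈ A, (B.filter fun h => Q v h).card := by
  classical
  have hmap : ∀ p ∈ (A ×ˢ B).filter fun p => Q p.1 p.2, p.1 ∈ A := by
    intro p hp
    simp only [Finset.mem_filter, Finset.mem_product] at hp
    exact hp.1.1
  rw [Finset.card_eq_sum_card_fiberwise hmap]
  apply Finset.sum_congr rfl
  intro v hv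
  apply Finset.card_bij (fun p _ => p.2)
  · intro p hp
    simp only [Finset.mem_filter, Finset.mem_product] at hp ⊢
    obtain ⟨⟨⟨hA, hB⟩, hQ⟩, hfst⟩ := hp
    subst hfst
    exact ⟨hB, hQ⟩
  · intro p hp p' hp' hee
    simp only [Finset.mem_filter, Finset.mem_product] at hp hp'
    exact Prod.ext (hp.2.trans hp'.2.symm) hee
  · intro h hh
    simp only [Finset.mem_filter] at hh
    refine ⟨(v, h), ?_, rfl⟩
    simp only [Finset.mem_filter, Finset.mem_product]
    exact ⟨⟨⟨hv, hh.1⟩, hh.2⟩, trivial⟩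

end ProdHelper

section Core
variable {ι κ : Type*} [DecidableEq ι] [DecidableEq κ]
variable (V : Finset ι) (H : Finset κ) (x l u : ι → ℝ) (y a b : κ → ℝ) (t : ℕ)

/-- crossers of `h` strictly to the right of `v` -/
noncomputable def Rcr (v : ι) (h : κ) : Finset ι :=
  V.filter fun w => (a h < x w ∧ x w < b h ∧ l w < y h ∧ y h < u w) ∧ x v < x w

lemma Rcr_subset_Sst (v : ι) (h : κ) :
    Rcr V x l u y a b v h ⊆ Sst V x l u v (y h) := by
  intro w hw
  simp only [Rcr, Finset.mem_filter] at hw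
  simp only [Sst, Finset.mem_filter]
  exact ⟨hw.1, hw.2.2, hw.2.1.2.2.1, hw.2.1.2.2.2⟩

lemma longR_K1 (hinj : Set.InjOn x V) {v : ι} {h : κ}
    (hcross : a h < x v ∧ x v < b h ∧ l v < y h ∧ y h < u v)
    (hlong : t ≤ (Rcr V x l u y a b v h).card) :
    t ≤ (Wv V x l u t v (y h)).card ∧
      ∀ w ∈ Wv V x l u t v (y h), a h < x w ∧ x w < b h ∧ l w < y h ∧ y h < u w := by
  have hsub := Rcr_subset_Sst V x l u y a b v h
  have hScard : t ≤ (Sst V x l u v (y h)).card :=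
    le_trans hlong (Finset.card_le_card hsub)
  have hinjS : Set.InjOn x (Sst V x l u v (y h)) :=
    hinj.mono (by exact_mod_cast Finset.coe_subset.2 (Sst_subset V x l u v (y h)))
  constructor
  · exact wop_card_ge hinjS hScard
  · intro w hw
    obtain ⟨hwV, hxvw, hlw, huw⟩ := Wv_mem_stab V x l u hw
    refine ⟨lt_trans hcross.1 hxvw, ?_, hlw, huw⟩
    by_contra hc
    push_neg at hc
    have hsub2 : Rcr V x l u y a b v h ⊆
        (Sst V x l u v (y h)).filter fun z => x z < x w := by
      intro z hz
      have hzS := hsub hz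
      simp only [Rcr, Finset.mem_filter] at hz
      simp only [Finset.mem_filter]
      exact ⟨hzS, lt_of_lt_of_le hz.2.1.2.1 hc⟩
    have : t ≤ rnk (Sst V x l u v (y h)) x w :=
      le_trans hlong (Finset.card_le_card hsub2)
    have hrk := (Finset.mem_filter.1 hw).2
    exact absurd hrk (not_lt.2 this)

lemma longR_bound (hinj : Set.InjOn x V)
    (hends : ∀ w ∈ V, ∀ w' ∈ V, w ≠ w' →
      l w ≠ l w' ∧ l w ≠ u w' ∧ u w ≠ l w' ∧ u w ≠ u w')
    (ht : 1 ≤ t)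
    (hK : ∀ S T, S ⊆ V → T ⊆ H → S.card = t → T.card = t →
      ¬ (∀ v ∈ S, ∀ h ∈ T, a h < x v ∧ x v < b h ∧ l v < y h ∧ y h < u v)) :
    ((V ×ˢ H).filter fun p =>
        (a p.2 < x p.1 ∧ x p.1 < b p.2 ∧ l p.1 < y p.2 ∧ y p.2 < u p.1)
          ∧ t ≤ (Rcr V x l u y a b p.1 p.2).card).card
      ≤ (t - 1) * (1 + 4 * t) * V.card := by
  classical
  rw [prod_filter_card V H (fun v h =>
    (a h < x v ∧ x v < b h ∧ l v < y h ∧ y h < u v)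
      ∧ t ≤ (Rcr V x l u y a b v h).card)]
  have hper : ∀ v ∈ V,
      (H.filter fun h => (a h < x v ∧ x v < b h ∧ l v < y h ∧ y h < u v)
          ∧ t ≤ (Rcr V x l u y a b v h).card).card
        ≤ (t - 1) * (1 + 2 * (EVs V x l u t v).card) := by
    intro v hv
    set S := H.filter fun h => (a h < x v ∧ x v < b h ∧ l v < y h ∧ y h < u v)
      ∧ t ≤ (Rcr V x l u y a b v h).card with hS
    have hfib : ∀ Wval ∈ S.image (fun h => Wv V x l u t v (y h)),
        (S.filter fun h => Wv V x l u t v (y h) = Wval).card ≤ t - 1 := by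
      intro Wval hWval
      by_contra hc
      push_neg at hc
      have hTcard : t ≤ (S.filter fun h => Wv V x l u t v (y h) = Wval).card := by omega
      obtain ⟨T, hTsub, hTc⟩ := Finset.exists_subset_card_eq hTcard
      obtain ⟨h₀, hh₀S, hh₀W⟩ := Finset.mem_image.1 hWval
      have hh₀ := Finset.mem_filter.1 hh₀S
      have hK1 := longR_K1 V x l u y a b t hinj hh₀.2.1 hh₀.2.2
      have hWcard : t ≤ Wval.card := hh₀W ▸ hK1.1
      obtain ⟨S', hS'sub, hS'c⟩ := Finset.exists_subset_card_eq hWcard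
      apply hK S' T
      · intro z hz
        have := hS'sub hz
        rw [← hh₀W] at this
        exact Sst_subset V x l u v (y h₀) (Wv_subset_Sst V x l u t v (y h₀) this)
      · intro z hz
        have := hTsub hz
        exact Finset.filter_subset _ _ ((Finset.filter_subset _ _) this)
      · exact hS'c
      · exact hTc
      · intro v' hv' h hh
        have hhfib := hTsub hh
        have hhmem := Finset.mem_filter.1 hhfib
        have hhS := Finset.mem_filter.1 hhmem.1
        have hK1h := longR_K1 V x l u y a b t hinj hhS.2.1 hhS.2.2
        apply hK1h.2
        rw [hhmem.2]
        exact hS'sub hv'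
    have hcount := Finset.card_eq_sum_card_image (fun h => Wv V x l u t v (y h)) S
    have himg : (S.image (fun h => Wv V x l u t v (y h))).card
        ≤ 1 + 2 * (EVs V x l u t v).card := by
      have himgeq : S.image (fun h => Wv V x l u t v (y h))
          = (S.image y).image (Wv V x l u t v) := by
        rw [Finset.image_image]
        rfl
      rw [himgeq]
      set Z := S.image y with hZ
      have hZb : ∀ z ∈ Z, l v < z ∧ z < u v := by
        intro z hz
        obtain ⟨h, hhS, hhy⟩ := Finset.mem_image.1 hz
        have := (Finset.mem_filter.1 hhS).2.1
        exact ⟨hhy ▸ this.2.2.1, hhy ▸ this.2.2.2⟩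
      calc (Z.image (Wv V x l u t v)).card
          ≤ 1 + (CHpairs Z (Wv V x l u t v)).card := image_card_le_CHpairs Z _
        _ ≤ 1 + 2 * (EVs V x l u t v).card := by
            have := CH_le_two_EV V x l u t hinj hends hv Z hZb
            omega
    calc S.card = ∑ Wval ∈ S.image (fun h => Wv V x l u t v (y h)),
          (S.filter fun h => Wv V x l u t v (y h) = Wval).card := hcount
      _ ≤ ∑ _Wval ∈ S.image (fun h => Wv V x l u t v (y h)), (t - 1) :=
          Finset.sum_le_sum hfib
      _ = (S.image (fun h => Wv V x l u t v (y h))).card * (t - 1) := by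
          rw [Finset.sum_const, smul_eq_mul]
      _ ≤ (1 + 2 * (EVs V x l u t v).card) * (t - 1) :=
          Nat.mul_le_mul_right _ himg
      _ = (t - 1) * (1 + 2 * (EVs V x l u t v).card) := Nat.mul_comm _ _
  have hEVsum : ∑ v ∈ V, (EVs V x l u t v).card ≤ 2 * t * V.card := by
    have hswap : ∑ v ∈ V, (EVs V x l u t v).card
        = ∑ q ∈ V ×ˢ ({true, false} : Finset Bool),
            (V.filter fun v => AE V x l u t v q.1 q.2).card := by
      have h1 : ∀ v : ι, (EVs V x l u t v).card
          = ∑ q ∈ V ×ˢ ({true, false} : Finset Bool),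
              (if AE V x l u t v q.1 q.2 then 1 else 0) := by
        intro v
        rw [EVs, Finset.card_filter]
      have h2 : ∀ q : ι × Bool, (V.filter fun v => AE V x l u t v q.1 q.2).card
          = ∑ v ∈ V, (if AE V x l u t v q.1 q.2 then 1 else 0) := by
        intro q
        rw [Finset.card_filter]
      rw [Finset.sum_congr rfl (fun v _ => h1 v)]
      rw [Finset.sum_comm]
      exact Finset.sum_congr rfl (fun q _ => (h2 q).symm)
    rw [hswap]
    calc ∑ q ∈ V ×ˢ ({true, false} : Finset Bool),
          (V.filter fun v => AE V x l u t v q.1 q.2).card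
        ≤ ∑ _q ∈ V ×ˢ ({true, false} : Finset Bool), t := by
          apply Finset.sum_le_sum
          intro q _
          exact AE_count V x l u t hinj q.1 q.2
      _ = (V ×ˢ ({true, false} : Finset Bool)).card * t := by
          rw [Finset.sum_const, smul_eq_mul]
      _ = (V.card * 2) * t := by
          rw [Finset.card_product]
          norm_num
      _ = 2 * t * V.card := by ring
  calc ∑ v ∈ V, (H.filter fun h =>
        (a h < x v ∧ x v < b h ∧ l v < y h ∧ y h < u v)
          ∧ t ≤ (Rcr V x l u y a b v h).card).card
      ≤ ∑ v ∈ V, (t - 1) * (1 + 2 * (EVs V x l u t v).card) := Finset.sum_le_sum hper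
    _ = (t - 1) * ∑ v ∈ V, (1 + 2 * (EVs V x l u t v).card) := by
        rw [Finset.mul_sum]
    _ = (t - 1) * (V.card + 2 * ∑ v ∈ V, (EVs V x l u t v).card) := by
        rw [Finset.sum_add_distrib, Finset.sum_const, smul_eq_mul, mul_one, Finset.mul_sum]
    _ ≤ (t - 1) * (V.card + 2 * (2 * t * V.card)) := by
        apply Nat.mul_le_mul_left
        have := hEVsum
        omega
    _ = (t - 1) * (1 + 4 * t) * V.card := by ring

end Core

section CoreFull
variable {ι κ : Type*} [DecidableEq ι] [DecidableEq κ]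
variable (V : Finset ι) (H : Finset κ) (x l u : ι → ℝ) (y a b : κ → ℝ) (t : ℕ)

lemma prod_filter_card2 {α β : Type*} [DecidableEq α] [DecidableEq β]
    (A : Finset α) (B : Finset β) (Q : α → β → Prop)
    [DecidablePred fun p : α × β => Q p.1 p.2] [∀ h, DecidablePred fun v => Q v h] :
    ((A ×ˢ B).filter fun p => Q p.1 p.2).card
      = ∑ h ∈ B, (A.filter fun v => Q v h).card := by
  classical
  have hmap : ∀ p ∈ (A ×ˢ B).filter fun p => Q p.1 p.2, p.2 ∈ B := by
    intro p hp
    simp only [Finset.mem_filter, Finset.mem_product] at hp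
    exact hp.1.2
  rw [Finset.card_eq_sum_card_fiberwise hmap]
  apply Finset.sum_congr rfl
  intro h hh
  apply Finset.card_bij (fun p _ => p.1)
  · intro p hp
    simp only [Finset.mem_filter, Finset.mem_product] at hp ⊢
    obtain ⟨⟨⟨hA, hB⟩, hQ⟩, hsnd⟩ := hp
    subst hsnd
    exact ⟨hA, hQ⟩
  · intro p hp p' hp' hee
    simp only [Finset.mem_filter, Finset.mem_product] at hp hp'
    exact Prod.ext hee (hp.2.trans hp'.2.symm)
  · intro v hv
    simp only [Finset.mem_filter] at hv
    refine ⟨(v, h), ?_, rfl⟩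
    simp only [Finset.mem_filter, Finset.mem_product]
    exact ⟨⟨⟨hv.1, hh⟩, hv.2⟩, trivial⟩

lemma core_bound (hinj : Set.InjOn x V)
    (hends : ∀ w ∈ V, ∀ w' ∈ V, w ≠ w' →
      l w ≠ l w' ∧ l w ≠ u w' ∧ u w ≠ l w' ∧ u w ≠ u w')
    (ht : 1 ≤ t)
    (hK : ∀ S T, S ⊆ V → T ⊆ H → S.card = t → T.card = t →
      ¬ (∀ v ∈ S, ∀ h ∈ T, a h < x v ∧ x v < b h ∧ l v < y h ∧ y h < u v)) :
    ((V ×ˢ H).filter fun p =>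
        a p.2 < x p.1 ∧ x p.1 < b p.2 ∧ l p.1 < y p.2 ∧ y p.2 < u p.1).card
      ≤ 2 * t * H.card + 2 * ((t - 1) * (1 + 4 * t)) * V.card := by
  classical
  set xm : ι → ℝ := fun v => -(x v) with hxm
  set am : κ → ℝ := fun h => -(b h) with ham
  set bm : κ → ℝ := fun h => -(a h) with hbm
  have hinjm : Set.InjOn xm V := by
    intro p hp q hq hpq
    apply hinj hp hq
    have : -(x p) = -(x q) := hpq
    linarith
  have hcrossm : ∀ v h, (am h < xm v ∧ xm v < bm h ∧ l v < y h ∧ y h < u v)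
      ↔ (a h < x v ∧ x v < b h ∧ l v < y h ∧ y h < u v) := by
    intro v h
    simp only [hxm, ham, hbm]
    constructor <;> rintro ⟨h1, h2, h3, h4⟩ <;> exact ⟨by linarith, by linarith, h3, h4⟩
  have hKm : ∀ S T, S ⊆ V → T ⊆ H → S.card = t → T.card = t →
      ¬ (∀ v ∈ S, ∀ h ∈ T, am h < xm v ∧ xm v < bm h ∧ l v < y h ∧ y h < u v) := by
    intro S T hS hT hSc hTc hall
    exact hK S T hS hT hSc hTc (fun v hv h hh => (hcrossm v h).1 (hall v hv h hh))
  set Eshort := (V ×ˢ H).filter fun p =>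
    (a p.2 < x p.1 ∧ x p.1 < b p.2 ∧ l p.1 < y p.2 ∧ y p.2 < u p.1)
      ∧ (V.filter fun w => a p.2 < x w ∧ x w < b p.2 ∧ l w < y p.2 ∧ y p.2 < u w).card ≤ 2 * t
    with hEshort
  set ElongR := (V ×ˢ H).filter fun p =>
    (a p.2 < x p.1 ∧ x p.1 < b p.2 ∧ l p.1 < y p.2 ∧ y p.2 < u p.1)
      ∧ t ≤ (Rcr V x l u y a b p.1 p.2).card with hElongR
  set ElongL := (V ×ˢ H).filter fun p =>
    (am p.2 < xm p.1 ∧ xm p.1 < bm p.2 ∧ l p.1 < y p.2 ∧ y p.2 < u p.1)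
      ∧ t ≤ (Rcr V xm l u y am bm p.1 p.2).card with hElongL
  have hdecomp : ((V ×ˢ H).filter fun p =>
      a p.2 < x p.1 ∧ x p.1 < b p.2 ∧ l p.1 < y p.2 ∧ y p.2 < u p.1)
      ⊆ Eshort ∪ ElongR ∪ ElongL := by
    intro p hp
    simp only [Finset.mem_filter, Finset.mem_product] at hp
    obtain ⟨⟨hpV, hpH⟩, hcross⟩ := hp
    set crossers := V.filter fun w =>
      a p.2 < x w ∧ x w < b p.2 ∧ l w < y p.2 ∧ y p.2 < u w with hcrs
    by_cases hdeg : crossers.card ≤ 2 * t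
    · apply Finset.mem_union_left
      apply Finset.mem_union_left
      rw [hEshort]
      exact Finset.mem_filter.2 ⟨Finset.mem_product.2 ⟨hpV, hpH⟩, hcross, hdeg⟩
    · push_neg at hdeg
      have hp1mem : p.1 ∈ crossers := by
        rw [hcrs]; exact Finset.mem_filter.2 ⟨hpV, hcross⟩
      have hsplit : crossers.erase p.1 ⊆
          Rcr V x l u y a b p.1 p.2 ∪ Rcr V xm l u y am bm p.1 p.2 := by
        intro w hw
        obtain ⟨hwne, hwc⟩ := Finset.mem_erase.1 hw
        rw [hcrs] at hwc
        obtain ⟨hwV, hwcross⟩ := Finset.mem_filter.1 hwc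
        have hxne : x w ≠ x p.1 := fun hh => hwne (hinj hwV hpV hh)
        rcases lt_or_gt_of_ne hxne with hlt | hgt
        · apply Finset.mem_union_right
          simp only [Rcr, Finset.mem_filter, hxm, ham, hbm]
          refine ⟨hwV, ⟨?_, ?_, hwcross.2.2.1, hwcross.2.2.2⟩, ?_⟩
          · simp only [neg_lt_neg_iff]; exact hwcross.2.1
          · simp only [neg_lt_neg_iff]; exact hwcross.1
          · simp only [neg_lt_neg_iff]; exact hlt
        · apply Finset.mem_union_left
          simp only [Rcr, Finset.mem_filter]
          exact ⟨hwV, hwcross, hgt⟩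
      have hcard : 2 * t ≤ (Rcr V x l u y a b p.1 p.2).card
          + (Rcr V xm l u y am bm p.1 p.2).card := by
        have h1 : crossers.card - 1 = (crossers.erase p.1).card :=
          (Finset.card_erase_of_mem hp1mem).symm
        have h2 := Finset.card_le_card hsplit
        have h3 := Finset.card_union_le (Rcr V x l u y a b p.1 p.2)
          (Rcr V xm l u y am bm p.1 p.2)
        omega
      rcases le_or_gt t (Rcr V x l u y a b p.1 p.2).card with hR | hR
      · apply Finset.mem_union_left
        apply Finset.mem_union_right
        rw [hElongR]
        exact Finset.mem_filter.2 ⟨Finset.mem_product.2 ⟨hpV, hpH⟩, hcross, hR⟩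
      · apply Finset.mem_union_right
        rw [hElongL]
        refine Finset.mem_filter.2 ⟨Finset.mem_product.2 ⟨hpV, hpH⟩,
          (hcrossm p.1 p.2).2 hcross, ?_⟩
        omega
  have hshort : Eshort.card ≤ 2 * t * H.card := by
    rw [hEshort]
    rw [prod_filter_card2 V H (fun v h =>
      (a h < x v ∧ x v < b h ∧ l v < y h ∧ y h < u v)
        ∧ (V.filter fun w => a h < x w ∧ x w < b h ∧ l w < y h ∧ y h < u w).card ≤ 2 * t)]
    calc ∑ h ∈ H, (V.filter fun v =>
          (a h < x v ∧ x v < b h ∧ l v < y h ∧ y h < u v)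
            ∧ (V.filter fun w => a h < x w ∧ x w < b h ∧ l w < y h ∧ y h < u w).card ≤ 2 * t).card
        ≤ ∑ _h ∈ H, 2 * t := by
          apply Finset.sum_le_sum
          intro h _
          by_cases hdeg : (V.filter fun w =>
              a h < x w ∧ x w < b h ∧ l w < y h ∧ y h < u w).card ≤ 2 * t
          · calc (V.filter fun v =>
                (a h < x v ∧ x v < b h ∧ l v < y h ∧ y h < u v)
                  ∧ (V.filter fun w => a h < x w ∧ x w < b h ∧ l w < y h ∧ y h < u w).card ≤ 2 * t).card
                ≤ (V.filter fun v => a h < x v ∧ x v < b h ∧ l v < y h ∧ y h < u v).card := by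
                  apply Finset.card_le_card
                  intro v hv
                  simp only [Finset.mem_filter] at hv ⊢
                  exact ⟨hv.1, hv.2.1⟩
              _ ≤ 2 * t := hdeg
          · have : (V.filter fun v =>
                (a h < x v ∧ x v < b h ∧ l v < y h ∧ y h < u v)
                  ∧ (V.filter fun w => a h < x w ∧ x w < b h ∧ l w < y h ∧ y h < u w).card ≤ 2 * t) = ∅ := by
              apply Finset.filter_false_of_mem
              intro v _
              rintro ⟨_, hc⟩
              exact hdeg hc
            rw [this]
            simp
      _ = 2 * t * H.card := by rw [Finset.sum_const, smul_eq_mul, mul_comm]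
  have hlongR : ElongR.card ≤ (t - 1) * (1 + 4 * t) * V.card := by
    rw [hElongR]
    exact longR_bound V H x l u y a b t hinj hends ht hK
  have hlongL : ElongL.card ≤ (t - 1) * (1 + 4 * t) * V.card := by
    rw [hElongL]
    exact longR_bound V H xm l u y am bm t hinjm hends ht hKm
  calc ((V ×ˢ H).filter fun p =>
        a p.2 < x p.1 ∧ x p.1 < b p.2 ∧ l p.1 < y p.2 ∧ y p.2 < u p.1).card
      ≤ (Eshort ∪ ElongR ∪ ElongL).card := Finset.card_le_card hdecomp
    _ ≤ (Eshort ∪ ElongR).card + ElongL.card := Finset.card_union_le _ _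
    _ ≤ Eshort.card + ElongR.card + ElongL.card := by
        have := Finset.card_union_le Eshort ElongR
        omega
    _ ≤ 2 * t * H.card + 2 * ((t - 1) * (1 + 4 * t)) * V.card := by
        have h1 := hshort
        have h2 := hlongR
        have h3 := hlongL
        have h4 : 2 * ((t - 1) * (1 + 4 * t)) * V.card
            = (t - 1) * (1 + 4 * t) * V.card + (t - 1) * (1 + 4 * t) * V.card := by ring
        omega

end CoreFull

section Geometry

/-- the vertical edge of `p` at `x = vx p` crosses the horizontal edge of `q` at `y = hy q` -/
def CrossVH (vx hy : Rect → ℝ) (p q : Rect) : Prop :=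
  q.x1 < vx p ∧ vx p < q.x2 ∧ p.y1 < hy q ∧ hy q < p.y2

lemma mem_frame {r : Rect} {p : ℝ × ℝ} : p ∈ r.frame ↔
    (r.x1 ≤ p.1 ∧ p.1 ≤ r.x2 ∧ (p.2 = r.y1 ∨ p.2 = r.y2)) ∨
    ((p.1 = r.x1 ∨ p.1 = r.x2) ∧ r.y1 ≤ p.2 ∧ p.2 ≤ r.y2) := by
  simp only [Rect.frame, Set.mem_union, Set.mem_prod, Set.mem_Icc, Set.mem_insert_iff,
    Set.mem_singleton_iff]
  tauto

lemma genpos_x {F : Finset Rect} (hgp : GenPos F) {r s : Rect}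
    (hr : r ∈ F) (hs : s ∈ F) (hne : r ≠ s) :
    r.x1 ≠ s.x1 ∧ r.x1 ≠ s.x2 ∧ r.x2 ≠ s.x1 ∧ r.x2 ≠ s.x2 := by
  have h := (hgp r hr s hs hne).1
  rw [Set.eq_empty_iff_forall_notMem] at h
  refine ⟨?_, ?_, ?_, ?_⟩ <;> intro heq
  · exact h r.x1 ⟨by simp, by simp [heq]⟩
  · exact h r.x1 ⟨by simp, by simp [heq]⟩
  · exact h r.x2 ⟨by simp, by simp [heq]⟩
  · exact h r.x2 ⟨by simp, by simp [heq]⟩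

lemma genpos_y {F : Finset Rect} (hgp : GenPos F) {r s : Rect}
    (hr : r ∈ F) (hs : s ∈ F) (hne : r ≠ s) :
    r.y1 ≠ s.y1 ∧ r.y1 ≠ s.y2 ∧ r.y2 ≠ s.y1 ∧ r.y2 ≠ s.y2 := by
  have h := (hgp r hr s hs hne).2
  rw [Set.eq_empty_iff_forall_notMem] at h
  refine ⟨?_, ?_, ?_, ?_⟩ <;> intro heq
  · exact h r.y1 ⟨by simp, by simp [heq]⟩
  · exact h r.y1 ⟨by simp, by simp [heq]⟩
  · exact h r.y2 ⟨by simp, by simp [heq]⟩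
  · exact h r.y2 ⟨by simp, by simp [heq]⟩

lemma frame_inter_classify {F : Finset Rect} (hgp : GenPos F) {r s : Rect}
    (hr : r ∈ F) (hs : s ∈ F) (hne : r ≠ s)
    (hint : (r.frame ∩ s.frame).Nonempty) :
    CrossVH (fun z => z.x1) (fun z => z.y1) r s ∨
    CrossVH (fun z => z.x1) (fun z => z.y2) r s ∨
    CrossVH (fun z => z.x2) (fun z => z.y1) r s ∨
    CrossVH (fun z => z.x2) (fun z => z.y2) r s ∨
    CrossVH (fun z => z.x1) (fun z => z.y1) s r ∨
    CrossVH (fun z => z.x1) (fun z => z.y2) s r ∨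
    CrossVH (fun z => z.x2) (fun z => z.y1) s r ∨
    CrossVH (fun z => z.x2) (fun z => z.y2) s r := by
  obtain ⟨p, hpr, hps⟩ := hint
  rw [mem_frame] at hpr hps
  have hgx := genpos_x hgp hr hs hne
  have hgy := genpos_y hgp hr hs hne
  rcases hpr with ⟨hx1r, hx2r, hyr⟩ | ⟨hxr, hy1r, hy2r⟩
  · rcases hps with ⟨_, _, hys⟩ | ⟨hxs, hy1s, hy2s⟩
    · -- horizontal edge of r, horizontal edge of s : impossible
      exfalso
      rcases hyr with h1 | h1 <;> rcases hys with h2 | h2 <;> rw [h1] at h2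
      · exact hgy.1 h2
      · exact hgy.2.1 h2
      · exact hgy.2.2.1 h2
      · exact hgy.2.2.2 h2
    · -- horizontal edge of r, vertical edge of s : CrossVH _ _ s r
      have hxstrict : ∀ c : ℝ, (c = s.x1 ∨ c = s.x2) → r.x1 ≤ c → c ≤ r.x2 →
          r.x1 < c ∧ c < r.x2 := by
        intro c hc h1 h2
        constructor
        · apply lt_of_le_of_ne h1
          rcases hc with h | h <;> rw [h]
          · exact hgx.1
          · exact hgx.2.1
        · apply lt_of_le_of_ne h2
          intro hh
          rcases hc with h | h <;> rw [h] at hh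
          · exact hgx.2.2.1 hh.symm
          · exact hgx.2.2.2 hh.symm
      have hystrict : ∀ c : ℝ, (c = r.y1 ∨ c = r.y2) → s.y1 ≤ c → c ≤ s.y2 →
          s.y1 < c ∧ c < s.y2 := by
        intro c hc h1 h2
        constructor
        · apply lt_of_le_of_ne h1
          intro hh
          rcases hc with h | h <;> rw [h] at hh
          · exact hgy.1 hh.symm
          · exact hgy.2.2.1 hh.symm
        · apply lt_of_le_of_ne h2
          rcases hc with h | h <;> rw [h]
          · exact hgy.2.1
          · exact hgy.2.2.2
      obtain ⟨ha, hb⟩ := hxstrict p.1 hxs hx1r hx2r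
      obtain ⟨hc, hd⟩ := hystrict p.2 hyr hy1s hy2s
      rcases hxs with h1 | h1 <;> rcases hyr with h2 | h2
      · refine Or.inr (Or.inr (Or.inr (Or.inr (Or.inl ?_))))
        rw [h1] at ha hb
        rw [h2] at hc hd
        exact ⟨ha, hb, hc, hd⟩
      · refine Or.inr (Or.inr (Or.inr (Or.inr (Or.inr (Or.inl ?_)))))
        rw [h1] at ha hb
        rw [h2] at hc hd
        exact ⟨ha, hb, hc, hd⟩
      · refine Or.inr (Or.inr (Or.inr (Or.inr (Or.inr (Or.inr (Or.inl ?_))))))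
        rw [h1] at ha hb
        rw [h2] at hc hd
        exact ⟨ha, hb, hc, hd⟩
      · refine Or.inr (Or.inr (Or.inr (Or.inr (Or.inr (Or.inr (Or.inr ?_))))))
        rw [h1] at ha hb
        rw [h2] at hc hd
        exact ⟨ha, hb, hc, hd⟩
  · rcases hps with ⟨hx1s, hx2s, hys⟩ | ⟨hxs, _, _⟩
    · -- vertical edge of r, horizontal edge of s : CrossVH _ _ r s
      have hxstrict : ∀ c : ℝ, (c = r.x1 ∨ c = r.x2) → s.x1 ≤ c → c ≤ s.x2 →
          s.x1 < c ∧ c < s.x2 := by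
        intro c hc h1 h2
        constructor
        · apply lt_of_le_of_ne h1
          intro hh
          rcases hc with h | h <;> rw [h] at hh
          · exact hgx.1 hh.symm
          · exact hgx.2.2.1 hh.symm
        · apply lt_of_le_of_ne h2
          rcases hc with h | h <;> rw [h]
          · exact hgx.2.1
          · exact hgx.2.2.2
      have hystrict : ∀ c : ℝ, (c = s.y1 ∨ c = s.y2) → r.y1 ≤ c → c ≤ r.y2 →
          r.y1 < c ∧ c < r.y2 := by
        intro c hc h1 h2
        constructor
        · apply lt_of_le_of_ne h1
          rcases hc with h | h <;> rw [h]
          · exact hgy.1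
          · exact hgy.2.1
        · apply lt_of_le_of_ne h2
          intro hh
          rcases hc with h | h <;> rw [h] at hh
          · exact hgy.2.2.1 hh.symm
          · exact hgy.2.2.2 hh.symm
      obtain ⟨ha, hb⟩ := hxstrict p.1 hxr hx1s hx2s
      obtain ⟨hc, hd⟩ := hystrict p.2 hys hy1r hy2r
      rcases hxr with h1 | h1 <;> rcases hys with h2 | h2
      · rw [h1] at ha hb; rw [h2] at hc hd
        exact Or.inl ⟨ha, hb, hc, hd⟩
      · rw [h1] at ha hb; rw [h2] at hc hd
        exact Or.inr (Or.inl ⟨ha, hb, hc, hd⟩)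
      · rw [h1] at ha hb; rw [h2] at hc hd
        exact Or.inr (Or.inr (Or.inl ⟨ha, hb, hc, hd⟩))
      · rw [h1] at ha hb; rw [h2] at hc hd
        exact Or.inr (Or.inr (Or.inr (Or.inl ⟨ha, hb, hc, hd⟩)))
    · -- vertical, vertical : impossible
      exfalso
      rcases hxr with h1 | h1 <;> rcases hxs with h2 | h2 <;> rw [h1] at h2
      · exact hgx.1 h2
      · exact hgx.2.1 h2
      · exact hgx.2.2.1 h2
      · exact hgx.2.2.2 h2

lemma crossVH_frames_inter {vx hy : Rect → ℝ}
    (hvx : ∀ z : Rect, vx z = z.x1 ∨ vx z = z.x2)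
    (hhy : ∀ z : Rect, hy z = z.y1 ∨ hy z = z.y2)
    {p q : Rect} (h : CrossVH vx hy p q) :
    (p.frame ∩ q.frame).Nonempty := by
  refine ⟨(vx p, hy q), ?_, ?_⟩
  · rw [mem_frame]
    right
    exact ⟨hvx p, le_of_lt h.2.2.1, le_of_lt h.2.2.2⟩
  · rw [mem_frame]
    left
    exact ⟨le_of_lt h.1, le_of_lt h.2.1, hhy q⟩

end Geometry

section Final

lemma class_bound (t : ℕ) (ht : 1 ≤ t) (A B : Finset Rect) (fx fy : Rect → ℝ)
    (hinj : Set.InjOn fx A)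
    (hends : ∀ w ∈ A, ∀ w' ∈ A, w ≠ w' →
      w.y1 ≠ w'.y1 ∧ w.y1 ≠ w'.y2 ∧ w.y2 ≠ w'.y1 ∧ w.y2 ≠ w'.y2)
    (hK : ∀ S T, S ⊆ A → T ⊆ B → S.card = t → T.card = t →
      ¬ (∀ v ∈ S, ∀ h ∈ T, CrossVH fx fy v h)) :
    ((A ×ˢ B).filter fun p => CrossVH fx fy p.1 p.2).card
      ≤ 2 * t * B.card + 2 * ((t - 1) * (1 + 4 * t)) * A.card := by
  have h := core_bound A B fx (fun z => z.y1) (fun z => z.y2) fy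
    (fun z => z.x1) (fun z => z.x2) t hinj hends ht
    (by
      intro S T hS hT hSc hTc hall
      exact hK S T hS hT hSc hTc (fun v hv hh hhh => hall v hv hh hhh))
  have hsets : ((A ×ˢ B).filter fun p => CrossVH fx fy p.1 p.2)
      = ((A ×ˢ B).filter fun p =>
          (fun z : Rect => z.x1) p.2 < fx p.1 ∧ fx p.1 < (fun z : Rect => z.x2) p.2 ∧
          (fun z : Rect => z.y1) p.1 < fy p.2 ∧ fy p.2 < (fun z : Rect => z.y2) p.1) := by
    apply Finset.filter_congr
    intro p _
    exact Iff.rfl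
  rw [hsets]
  exact h

lemma class_bound2 (t : ℕ) (ht : 1 ≤ t) (A B : Finset Rect) (fx fy : Rect → ℝ)
    (hinj : Set.InjOn fy A)
    (hends : ∀ w ∈ A, ∀ w' ∈ A, w ≠ w' →
      w.x1 ≠ w'.x1 ∧ w.x1 ≠ w'.x2 ∧ w.x2 ≠ w'.x1 ∧ w.x2 ≠ w'.x2)
    (hK : ∀ S T, S ⊆ A → T ⊆ B → S.card = t → T.card = t →
      ¬ (∀ v ∈ S, ∀ h ∈ T, CrossVH fx fy h v)) :
    ((A ×ˢ B).filter fun p => CrossVH fx fy p.2 p.1).card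
      ≤ 2 * t * B.card + 2 * ((t - 1) * (1 + 4 * t)) * A.card := by
  have h := core_bound A B fy (fun z => z.x1) (fun z => z.x2) fx
    (fun z => z.y1) (fun z => z.y2) t hinj hends ht
    (by
      intro S T hS hT hSc hTc hall
      apply hK S T hS hT hSc hTc
      intro v hv hh hhh
      obtain ⟨h1, h2, h3, h4⟩ := hall v hv hh hhh
      exact ⟨h3, h4, h1, h2⟩)
  have hsets : ((A ×ˢ B).filter fun p => CrossVH fx fy p.2 p.1)
      = ((A ×ˢ B).filter fun p =>
          (fun z : Rect => z.y1) p.2 < fy p.1 ∧ fy p.1 < (fun z : Rect => z.y2) p.2 ∧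
          (fun z : Rect => z.x1) p.1 < fx p.2 ∧ fx p.2 < (fun z : Rect => z.x2) p.1) := by
    apply Finset.filter_congr
    intro p _
    constructor
    · rintro ⟨h1, h2, h3, h4⟩; exact ⟨h3, h4, h1, h2⟩
    · rintro ⟨h1, h2, h3, h4⟩; exact ⟨h3, h4, h1, h2⟩
  rw [hsets]
  exact h

theorem stmt_14 :
    ∃ c : ℝ, 0 < c ∧ ∀ t : ℕ, 2 ≤ t → ∀ (A B : Finset Rect) (n m : ℕ),
      A.card = n → B.card = m → GenPos (A ∪ B) →
      (¬ ∃ (S T : Finset Rect), S ⊆ A ∧ T ⊆ B ∧ S.card = t ∧ T.card = t ∧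
        ∀ a ∈ S, ∀ b ∈ T, (a.frame ∩ b.frame).Nonempty) →
      ((((A ×ˢ B).filter fun p => (p.1.frame ∩ p.2.frame).Nonempty).card : ℝ)
        ≤ c * ((t : ℝ) ^ 6 * n + (t : ℝ) * m)) := by
  classical
  refine ⟨64, by norm_num, ?_⟩
  intro t ht A B n m hn hm hgp hKmain
  subst hn
  subst hm
  have ht1 : 1 ≤ t := le_trans (by norm_num) ht
  -- distinctness facts
  have hmemA : ∀ r ∈ A, r ∈ A ∪ B := fun r hr => Finset.mem_union_left _ hr
  have hmemB : ∀ r ∈ B, r ∈ A ∪ B := fun r hr => Finset.mem_union_right _ hr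
  have hendsY : ∀ w ∈ A, ∀ w' ∈ A, w ≠ w' →
      w.y1 ≠ w'.y1 ∧ w.y1 ≠ w'.y2 ∧ w.y2 ≠ w'.y1 ∧ w.y2 ≠ w'.y2 :=
    fun w hw w' hw' hne => genpos_y hgp (hmemA w hw) (hmemA w' hw') hne
  have hendsX : ∀ w ∈ A, ∀ w' ∈ A, w ≠ w' →
      w.x1 ≠ w'.x1 ∧ w.x1 ≠ w'.x2 ∧ w.x2 ≠ w'.x1 ∧ w.x2 ≠ w'.x2 :=
    fun w hw w' hw' hne => genpos_x hgp (hmemA w hw) (hmemA w' hw') hne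
  have hinjx1 : Set.InjOn (fun z : Rect => z.x1) A := by
    intro r hr s hs hrs
    by_contra hne
    exact (hendsX r hr s hs hne).1 hrs
  have hinjx2 : Set.InjOn (fun z : Rect => z.x2) A := by
    intro r hr s hs hrs
    by_contra hne
    exact (hendsX r hr s hs hne).2.2.2 hrs
  have hinjy1 : Set.InjOn (fun z : Rect => z.y1) A := by
    intro r hr s hs hrs
    by_contra hne
    exact (hendsY r hr s hs hne).1 hrs
  have hinjy2 : Set.InjOn (fun z : Rect => z.y2) A := by
    intro r hr s hs hrs
    by_contra hne
    exact (hendsY r hr s hs hne).2.2.2 hrs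
  -- K_{t,t}-freeness for the classes
  have hvx1 : ∀ z : Rect, (fun z : Rect => z.x1) z = z.x1 ∨ (fun z : Rect => z.x1) z = z.x2 :=
    fun z => Or.inl rfl
  have hvx2 : ∀ z : Rect, (fun z : Rect => z.x2) z = z.x1 ∨ (fun z : Rect => z.x2) z = z.x2 :=
    fun z => Or.inr rfl
  have hhy1 : ∀ z : Rect, (fun z : Rect => z.y1) z = z.y1 ∨ (fun z : Rect => z.y1) z = z.y2 :=
    fun z => Or.inl rfl
  have hhy2 : ∀ z : Rect, (fun z : Rect => z.y2) z = z.y1 ∨ (fun z : Rect => z.y2) z = z.y2 :=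
    fun z => Or.inr rfl
  have hKc : ∀ (fx fy : Rect → ℝ),
      (∀ z : Rect, fx z = z.x1 ∨ fx z = z.x2) → (∀ z : Rect, fy z = z.y1 ∨ fy z = z.y2) →
      ∀ S T, S ⊆ A → T ⊆ B → S.card = t → T.card = t →
        ¬ (∀ v ∈ S, ∀ h ∈ T, CrossVH fx fy v h) := by
    intro fx fy hfx hfy S T hS hT hSc hTc hall
    exact hKmain ⟨S, T, hS, hT, hSc, hTc,
      fun v hv h hh => crossVH_frames_inter hfx hfy (hall v hv h hh)⟩
  have hKc2 : ∀ (fx fy : Rect → ℝ),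
      (∀ z : Rect, fx z = z.x1 ∨ fx z = z.x2) → (∀ z : Rect, fy z = z.y1 ∨ fy z = z.y2) →
      ∀ S T, S ⊆ A → T ⊆ B → S.card = t → T.card = t →
        ¬ (∀ v ∈ S, ∀ h ∈ T, CrossVH fx fy h v) := by
    intro fx fy hfx hfy S T hS hT hSc hTc hall
    refine hKmain ⟨S, T, hS, hT, hSc, hTc, fun v hv h hh => ?_⟩
    obtain ⟨p, hp1, hp2⟩ := crossVH_frames_inter hfx hfy (hall v hv h hh)
    exact ⟨p, hp2, hp1⟩
  -- the nine pieces
  set D0 := (A ×ˢ B).filter (fun p => p.1 = p.2) with hD0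
  set C1 := (A ×ˢ B).filter (fun p => CrossVH (fun z => z.x1) (fun z => z.y1) p.1 p.2) with hC1
  set C2 := (A ×ˢ B).filter (fun p => CrossVH (fun z => z.x1) (fun z => z.y2) p.1 p.2) with hC2
  set C3 := (A ×ˢ B).filter (fun p => CrossVH (fun z => z.x2) (fun z => z.y1) p.1 p.2) with hC3
  set C4 := (A ×ˢ B).filter (fun p => CrossVH (fun z => z.x2) (fun z => z.y2) p.1 p.2) with hC4
  set C5 := (A ×ˢ B).filter (fun p => CrossVH (fun z => z.x1) (fun z => z.y1) p.2 p.1) with hC5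
  set C6 := (A ×ˢ B).filter (fun p => CrossVH (fun z => z.x1) (fun z => z.y2) p.2 p.1) with hC6
  set C7 := (A ×ˢ B).filter (fun p => CrossVH (fun z => z.x2) (fun z => z.y1) p.2 p.1) with hC7
  set C8 := (A ×ˢ B).filter (fun p => CrossVH (fun z => z.x2) (fun z => z.y2) p.2 p.1) with hC8
  have hsub : ((A ×ˢ B).filter fun p => (p.1.frame ∩ p.2.frame).Nonempty)
      ⊆ D0 ∪ C1 ∪ C2 ∪ C3 ∪ C4 ∪ C5 ∪ C6 ∪ C7 ∪ C8 := by
    intro p hp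
    obtain ⟨hpAB, hpint⟩ := Finset.mem_filter.1 hp
    obtain ⟨hpA, hpB⟩ := Finset.mem_product.1 hpAB
    by_cases hpe : p.1 = p.2
    · refine Finset.mem_union_left _ (Finset.mem_union_left _ (Finset.mem_union_left _
        (Finset.mem_union_left _ (Finset.mem_union_left _ (Finset.mem_union_left _
        (Finset.mem_union_left _ (Finset.mem_union_left _ ?_)))))))
      exact Finset.mem_filter.2 ⟨hpAB, hpe⟩
    · have hcl := frame_inter_classify hgp (hmemA _ hpA) (hmemB _ hpB) hpe hpint
      rcases hcl with h | h | h | h | h | h | h | h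
      · refine Finset.mem_union_left _ (Finset.mem_union_left _ (Finset.mem_union_left _
          (Finset.mem_union_left _ (Finset.mem_union_left _ (Finset.mem_union_left _
          (Finset.mem_union_left _ (Finset.mem_union_right _ ?_)))))))
        exact Finset.mem_filter.2 ⟨hpAB, h⟩
      · refine Finset.mem_union_left _ (Finset.mem_union_left _ (Finset.mem_union_left _
          (Finset.mem_union_left _ (Finset.mem_union_left _ (Finset.mem_union_left _
          (Finset.mem_union_right _ ?_))))))
        exact Finset.mem_filter.2 ⟨hpAB, h⟩
      · refine Finset.mem_union_left _ (Finset.mem_union_left _ (Finset.mem_union_left _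
          (Finset.mem_union_left _ (Finset.mem_union_left _ (Finset.mem_union_right _ ?_)))))
        exact Finset.mem_filter.2 ⟨hpAB, h⟩
      · refine Finset.mem_union_left _ (Finset.mem_union_left _ (Finset.mem_union_left _
          (Finset.mem_union_left _ (Finset.mem_union_right _ ?_))))
        exact Finset.mem_filter.2 ⟨hpAB, h⟩
      · refine Finset.mem_union_left _ (Finset.mem_union_left _ (Finset.mem_union_left _
          (Finset.mem_union_right _ ?_)))
        exact Finset.mem_filter.2 ⟨hpAB, h⟩
      · refine Finset.mem_union_left _ (Finset.mem_union_left _ (Finset.mem_union_right _ ?_))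
        exact Finset.mem_filter.2 ⟨hpAB, h⟩
      · exact Finset.mem_union_left _ (Finset.mem_union_right _ (Finset.mem_filter.2 ⟨hpAB, h⟩))
      · exact Finset.mem_union_right _ (Finset.mem_filter.2 ⟨hpAB, h⟩)
  have hD0card : D0.card ≤ B.card := by
    apply Finset.card_le_card_of_injOn (fun p => p.2)
    · intro p hp
      obtain ⟨hpAB, _⟩ := Finset.mem_filter.1 hp
      exact (Finset.mem_product.1 hpAB).2
    · intro p hp q hq hpq
      rw [Finset.mem_coe, hD0, Finset.mem_filter] at hp hq
      exact Prod.ext (by rw [hp.2, hq.2]; exact hpq) hpq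
  have bnd : ∀ i : ℕ, i < 8 → True := fun _ _ => trivial
  have hB1 : C1.card ≤ 2 * t * B.card + 2 * ((t - 1) * (1 + 4 * t)) * A.card :=
    class_bound t ht1 A B _ _ hinjx1 hendsY (hKc _ _ hvx1 hhy1)
  have hB2 : C2.card ≤ 2 * t * B.card + 2 * ((t - 1) * (1 + 4 * t)) * A.card :=
    class_bound t ht1 A B _ _ hinjx1 hendsY (hKc _ _ hvx1 hhy2)
  have hB3 : C3.card ≤ 2 * t * B.card + 2 * ((t - 1) * (1 + 4 * t)) * A.card :=
    class_bound t ht1 A B _ _ hinjx2 hendsY (hKc _ _ hvx2 hhy1)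
  have hB4 : C4.card ≤ 2 * t * B.card + 2 * ((t - 1) * (1 + 4 * t)) * A.card :=
    class_bound t ht1 A B _ _ hinjx2 hendsY (hKc _ _ hvx2 hhy2)
  have hB5 : C5.card ≤ 2 * t * B.card + 2 * ((t - 1) * (1 + 4 * t)) * A.card :=
    class_bound2 t ht1 A B _ _ hinjy1 hendsX (hKc2 _ _ hvx1 hhy1)
  have hB6 : C6.card ≤ 2 * t * B.card + 2 * ((t - 1) * (1 + 4 * t)) * A.card :=
    class_bound2 t ht1 A B _ _ hinjy2 hendsX (hKc2 _ _ hvx1 hhy2)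
  have hB7 : C7.card ≤ 2 * t * B.card + 2 * ((t - 1) * (1 + 4 * t)) * A.card :=
    class_bound2 t ht1 A B _ _ hinjy1 hendsX (hKc2 _ _ hvx2 hhy1)
  have hB8 : C8.card ≤ 2 * t * B.card + 2 * ((t - 1) * (1 + 4 * t)) * A.card :=
    class_bound2 t ht1 A B _ _ hinjy2 hendsX (hKc2 _ _ hvx2 hhy2)
  -- cardinal of the union
  have hmain : ((A ×ˢ B).filter fun p => (p.1.frame ∩ p.2.frame).Nonempty).card
      ≤ D0.card + C1.card + C2.card + C3.card + C4.card
        + C5.card + C6.card + C7.card + C8.card := by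
    have h0 := Finset.card_le_card hsub
    have u1 := Finset.card_union_le (D0 ∪ C1 ∪ C2 ∪ C3 ∪ C4 ∪ C5 ∪ C6 ∪ C7) C8
    have u2 := Finset.card_union_le (D0 ∪ C1 ∪ C2 ∪ C3 ∪ C4 ∪ C5 ∪ C6) C7
    have u3 := Finset.card_union_le (D0 ∪ C1 ∪ C2 ∪ C3 ∪ C4 ∪ C5) C6
    have u4 := Finset.card_union_le (D0 ∪ C1 ∪ C2 ∪ C3 ∪ C4) C5
    have u5 := Finset.card_union_le (D0 ∪ C1 ∪ C2 ∪ C3) C4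
    have u6 := Finset.card_union_le (D0 ∪ C1 ∪ C2) C3
    have u7 := Finset.card_union_le (D0 ∪ C1) C2
    have u8 := Finset.card_union_le D0 C1
    omega
  -- numeric assembly (in ℕ)
  have hnat : ((A ×ˢ B).filter fun p => (p.1.frame ∩ p.2.frame).Nonempty).card
      ≤ 64 * t ^ 6 * A.card + 64 * t * B.card := by
    have hcoefB : B.card + 8 * (2 * t * B.card) ≤ 64 * t * B.card := by
      have : (1 + 16 * t) * B.card ≤ (64 * t) * B.card := by
        apply Nat.mul_le_mul_right
        omega
      nlinarith [this]
    have hcoefA : 8 * (2 * ((t - 1) * (1 + 4 * t)) * A.card) ≤ 64 * t ^ 6 * A.card := by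
      have h1 : 16 * ((t - 1) * (1 + 4 * t)) ≤ 64 * t ^ 6 := by
        have h2 : (t - 1) ≤ t := Nat.sub_le _ _
        have h3 : 1 + 4 * t ≤ 5 * t := by omega
        have h4 : (t - 1) * (1 + 4 * t) ≤ t * (5 * t) := Nat.mul_le_mul h2 h3
        have h5 : t * (5 * t) = 5 * t ^ 2 := by ring
        have h6 : 16 ≤ t ^ 4 := by
          calc (16 : ℕ) = 2 ^ 4 := by norm_num
            _ ≤ t ^ 4 := Nat.pow_le_pow_left ht 4
        have h7 : 80 * t ^ 2 ≤ 64 * t ^ 6 := by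
          calc 80 * t ^ 2 ≤ 64 * (t ^ 4 * t ^ 2) := by nlinarith [h6, Nat.zero_le (t ^ 2)]
            _ = 64 * t ^ 6 := by ring
        calc 16 * ((t - 1) * (1 + 4 * t)) ≤ 16 * (5 * t ^ 2) := by
              rw [← h5]; exact Nat.mul_le_mul_left _ h4
          _ = 80 * t ^ 2 := by ring
          _ ≤ 64 * t ^ 6 := h7
      calc 8 * (2 * ((t - 1) * (1 + 4 * t)) * A.card)
          = (16 * ((t - 1) * (1 + 4 * t))) * A.card := by ring
        _ ≤ (64 * t ^ 6) * A.card := Nat.mul_le_mul_right _ h1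
        _ = 64 * t ^ 6 * A.card := by ring
    have h8 : C1.card + C2.card + C3.card + C4.card + C5.card + C6.card + C7.card + C8.card
        ≤ 8 * (2 * t * B.card) + 8 * (2 * ((t - 1) * (1 + 4 * t)) * A.card) := by
      omega
    omega
  -- cast to ℝ
  have hcast : (((A ×ˢ B).filter fun p => (p.1.frame ∩ p.2.frame).Nonempty).card : ℝ)
      ≤ 64 * (t : ℝ) ^ 6 * A.card + 64 * (t : ℝ) * B.card := by
    have := hnat
    exact_mod_cast Nat.cast_le.2 this
  calc (((A ×ˢ B).filter fun p => (p.1.frame ∩ p.2.frame).Nonempty).card : ℝ)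
      ≤ 64 * (t : ℝ) ^ 6 * A.card + 64 * (t : ℝ) * B.card := hcast
    _ = 64 * ((t : ℝ) ^ 6 * A.card + (t : ℝ) * B.card) := by ring

end Final
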